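/- arXiv:2205.14805 — 9 statements merged into one kernel-verified Lean document; each statement's English description precedes it below -/
import Mathlib

section
/- For nonnegative integers n, k, r with n ≥ k, the λ-analogue of the r-Stirling number of the second kind satisfies S₂_λ^{(r)}(n,k) = λ^{n-k} (1/k!) Σ_{l=0}^{k} C(k,l) (-1)^{k-l} (l + r/λ)^n. In particular this expression vanishes when 0 ≤ n < k. -/
open Finset PowerSeries

/-- Generalized falling factorial `(x)_{n,λ}`. -/
def ffact (l x : ℝ) : ℕ → ℝ
  | 0 => 1
  | n + 1 => ffact l x n * (x - n * l)

section Helpers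

lemma orth (k m : ℕ) (hm : m ≤ k) :
    ∑ j ∈ Icc m k, (-1:ℝ)^(k-j) * (k.choose j : ℝ) * (j.choose m : ℝ)
      = if m = k then 1 else 0 := by
  have hIcc : Icc m k = Ico m (k+1) := by rw [Finset.Ico_add_one_right_eq_Icc]
  rw [hIcc, Finset.sum_Ico_eq_sum_range]
  have hk : k + 1 - m = (k - m) + 1 := by omega
  rw [hk]
  have step : ∀ i ∈ range (k - m + 1),
      (-1:ℝ)^(k-(m+i)) * (k.choose (m+i) : ℝ) * ((m+i).choose m : ℝ)
        = (k.choose m : ℝ) * ((-1:ℝ)^(k-m-i) * ((k-m).choose i : ℝ)) := by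
    intro i hi
    simp only [mem_range] at hi
    have h1 : k.choose (m+i) * (m+i).choose m = k.choose m * (k-m).choose (m+i-m) :=
      Nat.choose_mul (by omega)
    have h2 : m + i - m = i := by omega
    rw [h2] at h1
    have h3 : k - (m+i) = k - m - i := by omega
    rw [h3]
    have : ((k.choose (m+i) : ℝ)) * ((m+i).choose m : ℝ) = (k.choose m : ℝ) * ((k-m).choose i : ℝ) := by
      exact_mod_cast congrArg (Nat.cast : ℕ → ℝ) h1
    linear_combination (-1:ℝ)^(k-m-i) * this
  rw [Finset.sum_congr rfl step, ← Finset.mul_sum]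
  have alt : ∑ i ∈ range (k - m + 1), (-1:ℝ)^(k-m-i) * ((k-m).choose i : ℝ)
      = if k - m = 0 then 1 else 0 := by
    have : ∀ i ∈ range (k - m + 1), (-1:ℝ)^(k-m-i) * ((k-m).choose i : ℝ)
        = (-1:ℝ)^(k-m) * ((-1:ℝ)^i * ((k-m).choose i : ℝ)) := by
      intro i hi
      simp only [mem_range] at hi
      have hsum : (k-m-i) + i = k - m := by omega
      have : (-1:ℝ)^(k-m) = (-1:ℝ)^(k-m-i) * (-1:ℝ)^i := by rw [← pow_add, hsum]
      rw [this]
      have hsq : (-1:ℝ)^i * (-1:ℝ)^i = 1 := by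
        rw [← pow_add, Even.neg_one_pow ⟨i, by ring⟩]
      linear_combination (-((-1:ℝ)^(k-m-i) * ((k-m).choose i : ℝ))) * hsq
    rw [Finset.sum_congr rfl this, ← Finset.mul_sum]
    have := Int.alternating_sum_range_choose (n := k - m)
    have hR : ∑ i ∈ range (k-m+1), (-1:ℝ)^i * ((k-m).choose i : ℝ)
        = ((∑ i ∈ range (k-m+1), (-1:ℤ)^i * ((k-m).choose i : ℤ) : ℤ) : ℝ) := by
      push_cast; rfl
    rw [hR, this]
    rcases Nat.eq_zero_or_pos (k - m) with h | h
    · simp [h]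
    · have h0 : k - m ≠ 0 := by omega
      simp [h0]
  rw [alt]
  rcases eq_or_ne m k with h | h
  · simp [h]
  · have : k - m ≠ 0 := by omega
    simp [h, this]

lemma tri_swap (k : ℕ) (F : ℕ → ℕ → ℝ) :
    ∑ j ∈ range (k+1), ∑ m ∈ range (j+1), F j m
      = ∑ m ∈ range (k+1), ∑ j ∈ Icc m k, F j m := by
  have h1 : ∀ j ∈ range (k+1), ∑ m ∈ range (j+1), F j m
      = ∑ m ∈ range (k+1), if m ≤ j then F j m else 0 := by
    intro j hj
    simp only [mem_range] at hj
    rw [← Finset.sum_subset (Finset.range_subset_range.mpr (by omega : j+1 ≤ k+1))]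
    · exact Finset.sum_congr rfl (fun m hm => by simp at hm; rw [if_pos (by omega)])
    · intro m _ hm; simp at hm; rw [if_neg (by omega)]
  rw [Finset.sum_congr rfl h1, Finset.sum_comm]
  refine Finset.sum_congr rfl (fun m hm => ?_)
  simp only [mem_range] at hm
  rw [← Finset.sum_filter]
  refine Finset.sum_congr ?_ (fun _ _ => rfl)
  ext j; simp [Nat.lt_succ_iff]; omega

lemma inversion (N : ℕ) (f g : ℕ → ℝ)
    (H : ∀ m, m ≤ N → f m = ∑ j ∈ range (m+1), (m.choose j : ℝ) * g j) :
    ∀ k, k ≤ N → g k = ∑ j ∈ range (k+1), (-1:ℝ)^(k-j) * (k.choose j : ℝ) * f j := by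
  intro k hk
  have : ∑ j ∈ range (k+1), (-1:ℝ)^(k-j) * (k.choose j : ℝ) * f j
      = ∑ j ∈ range (k+1), ∑ m ∈ range (j+1),
          (-1:ℝ)^(k-j) * (k.choose j : ℝ) * ((j.choose m : ℝ) * g m) := by
    refine Finset.sum_congr rfl (fun j hj => ?_)
    simp only [mem_range] at hj
    rw [H j (by omega), Finset.mul_sum]
  rw [this, tri_swap]
  have inner : ∀ m ∈ range (k+1), ∑ j ∈ Icc m k,
      (-1:ℝ)^(k-j) * (k.choose j : ℝ) * ((j.choose m : ℝ) * g m)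
        = (if m = k then 1 else 0) * g m := by
    intro m hm
    simp only [mem_range] at hm
    rw [← orth k m (by omega), Finset.sum_mul]
    exact Finset.sum_congr rfl (fun j _ => by ring)
  rw [Finset.sum_congr rfl inner]
  have : ∀ m, (if m = k then (1:ℝ) else 0) * g m = if m = k then g m else 0 := by
    intro m; split <;> simp
  simp only [this]
  rw [Finset.sum_ite_eq' (range (k+1)) k g]
  simp

lemma pascal_split' (k : ℕ) (a : ℕ → ℝ) :
    ∑ j ∈ range (k+2), ((k+1).choose j : ℝ) * a j
      = ∑ j ∈ range (k+1), (k.choose j : ℝ) * a j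
        + ∑ j ∈ range (k+1), (k.choose j : ℝ) * a (j+1) := by
  rw [Finset.sum_range_succ' (fun j => ((k+1).choose j : ℝ) * a j)]
  have h1 : ∀ j, (((k+1).choose (j+1) : ℕ) : ℝ) = (k.choose j : ℝ) + (k.choose (j+1) : ℝ) := by
    intro j; rw [Nat.choose_succ_succ]; push_cast; ring
  have h2 : ∑ j ∈ range (k+1), (k.choose (j+1) : ℝ) * a (j+1)
      = ∑ j ∈ range (k+1), (k.choose j : ℝ) * a j - (k.choose 0 : ℝ) * a 0 := by
    rw [Finset.sum_range_succ' (fun j => (k.choose j : ℝ) * a j)]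
    rw [Finset.sum_range_succ (fun j => (k.choose (j+1) : ℝ) * a (j+1))]
    simp [Nat.choose_succ_self]
  simp only [h1, add_mul]
  rw [Finset.sum_add_distrib, h2]
  simp
  ring

lemma vanish : ∀ k : ℕ, ∀ n : ℕ, n < k → ∀ c : ℝ,
    ∑ j ∈ range (k+1), (k.choose j : ℝ) * (-1:ℝ)^(k-j) * ((j:ℝ) + c)^n = 0 := by
  intro k
  induction k with
  | zero => intro n hn; omega
  | succ t IH =>
    intro n hn c
    have key : ∑ j ∈ range (t+2), ((t+1).choose j : ℝ) * ((-1:ℝ)^(t+1-j) * ((j:ℝ)+c)^n)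
        = ∑ j ∈ range (t+1), (t.choose j : ℝ) * ((-1:ℝ)^(t+1-j) * ((j:ℝ)+c)^n)
          + ∑ j ∈ range (t+1), (t.choose j : ℝ) * ((-1:ℝ)^(t+1-(j+1)) * (((j:ℝ)+1)+c)^n) := by
      have := pascal_split' t (fun j => (-1:ℝ)^(t+1-j) * ((j:ℝ)+c)^n)
      simpa using this
    have sign : ∀ j, j ∈ range (t+1) → (-1:ℝ)^(t+1-j) = -((-1:ℝ)^(t-j)) := by
      intro j hj
      have : t+1-j = (t-j)+1 := by
        simp at hj; omega
      rw [this, pow_succ]; ring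
    have binom : ∀ j : ℕ, (((j:ℝ)+1)+c)^n
        = ∑ m ∈ range (n+1), (n.choose m : ℝ) * ((j:ℝ)+c)^m := by
      intro j
      have := add_pow ((j:ℝ)+c) 1 n
      simp only [one_pow, mul_one] at this
      rw [show ((j:ℝ)+1)+c = ((j:ℝ)+c)+1 by ring, this]
      exact Finset.sum_congr rfl (fun m _ => by ring)
    have main : ∑ j ∈ range (t+2), ((t+1).choose j : ℝ) * (-1:ℝ)^(t+1-j) * ((j:ℝ)+c)^n
        = ∑ j ∈ range (t+1), (t.choose j : ℝ) * (-1:ℝ)^(t-j) *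
            ((((j:ℝ)+1)+c)^n - ((j:ℝ)+c)^n) := by
      calc ∑ j ∈ range (t+2), ((t+1).choose j : ℝ) * (-1:ℝ)^(t+1-j) * ((j:ℝ)+c)^n
          = ∑ j ∈ range (t+2), ((t+1).choose j : ℝ) * ((-1:ℝ)^(t+1-j) * ((j:ℝ)+c)^n) := by
            exact Finset.sum_congr rfl (fun j _ => by ring)
        _ = _ := by
            rw [key, ← Finset.sum_add_distrib]
            refine Finset.sum_congr rfl (fun j hj => ?_)
            rw [sign j hj]
            have : t+1-(j+1) = t-j := by omega
            rw [this]
            ring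
    rw [main]
    have expand : ∀ j : ℕ, (((j:ℝ)+1)+c)^n - ((j:ℝ)+c)^n
        = ∑ m ∈ range n, (n.choose m : ℝ) * ((j:ℝ)+c)^m := by
      intro j
      rw [binom j, Finset.sum_range_succ]
      simp
    calc ∑ j ∈ range (t+1), (t.choose j : ℝ) * (-1:ℝ)^(t-j) *
            ((((j:ℝ)+1)+c)^n - ((j:ℝ)+c)^n)
        = ∑ j ∈ range (t+1), ∑ m ∈ range n,
            (n.choose m : ℝ) * ((t.choose j : ℝ) * (-1:ℝ)^(t-j) * ((j:ℝ)+c)^m) := by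
          refine Finset.sum_congr rfl (fun j _ => ?_)
          rw [expand j, Finset.mul_sum]
          exact Finset.sum_congr rfl (fun m _ => by ring)
      _ = ∑ m ∈ range n, (n.choose m : ℝ) *
            ∑ j ∈ range (t+1), (t.choose j : ℝ) * (-1:ℝ)^(t-j) * ((j:ℝ)+c)^m := by
          rw [Finset.sum_comm]
          exact Finset.sum_congr rfl (fun m _ => by rw [Finset.mul_sum])
      _ = 0 := by
          refine Finset.sum_eq_zero (fun m hm => ?_)
          simp at hm
          rw [IH m (by omega) c, mul_zero]

lemma ffact_eval (l : ℝ) (m : ℕ) : ∀ j : ℕ,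
    ffact l ((m:ℝ) * l) j = l^j * (m.descFactorial j : ℝ) := by
  intro j
  induction j with
  | zero => simp [ffact]
  | succ j IH =>
    rw [ffact, IH]
    rcases lt_or_ge j m with h | h
    · rw [Nat.descFactorial_succ]
      have : ((m - j : ℕ) : ℝ) = (m : ℝ) - (j : ℝ) := by
        push_cast [Nat.cast_sub (le_of_lt h)]; ring
      push_cast [this]
      ring
    · have h2 : m.descFactorial (j+1) = 0 := Nat.descFactorial_eq_zero_iff_lt.mpr (by omega)
      rw [h2]
      rcases eq_or_lt_of_le h with h' | h'
      · subst h'; simp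
      · have h1 : m.descFactorial j = 0 := Nat.descFactorial_eq_zero_iff_lt.mpr h'
        rw [h1]; simp

end Helpers

/-- Theorem 2: expression of λ-analogues of r-Stirling numbers of the second kind via the
finite difference sum, together with its vanishing for n < k. -/
theorem stmt1 (l : ℝ) (hl : l ≠ 0) (r : ℕ) (S : ℕ → ℕ → ℝ)
    (hS : ∀ (n : ℕ) (x : ℝ), (x + r) ^ n = ∑ k ∈ range (n + 1), S n k * ffact l x k)
    (n k : ℕ) :
    (k ≤ n →
      S n k = l ^ (n - k) * (1 / k.factorial) *
        ∑ j ∈ range (k + 1), (k.choose j : ℝ) * (-1 : ℝ) ^ (k - j) * ((j : ℝ) + r / l) ^ n) ∧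
    (n < k →
      l ^ (n - k) * (1 / k.factorial) *
        ∑ j ∈ range (k + 1), (k.choose j : ℝ) * (-1 : ℝ) ^ (k - j) * ((j : ℝ) + r / l) ^ n
        = 0) := by
  constructor
  · intro hk
    set g : ℕ → ℝ := fun j => S n j * l^j * (j.factorial : ℝ) with hg
    set f : ℕ → ℝ := fun m => ((m:ℝ)*l + (r:ℝ))^n with hf
    have H : ∀ m, m ≤ n → f m = ∑ j ∈ range (m+1), (m.choose j : ℝ) * g j := by
      intro m hm
      have h0 := hS n ((m:ℝ)*l)
      have h1 : f m = ∑ j ∈ range (n+1), S n j * (l^j * (m.descFactorial j : ℝ)) := by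
        rw [hf]
        simp only []
        rw [h0]
        exact Finset.sum_congr rfl (fun j _ => by rw [ffact_eval])
      rw [h1]
      rw [← Finset.sum_subset (Finset.range_subset_range.mpr (by omega : m+1 ≤ n+1))]
      · refine Finset.sum_congr rfl (fun j hj => ?_)
        rw [Nat.descFactorial_eq_factorial_mul_choose]
        push_cast
        rw [hg]
        ring
      · intro j _ hj
        simp only [mem_range, not_lt] at hj
        rw [Nat.descFactorial_eq_zero_iff_lt.mpr (by omega)]
        simp
    have hinv := inversion n f g H k hk
    -- rewrite f j = l^n * ((j:ℝ) + r/l)^n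
    have hfj : ∀ j : ℕ, f j = l^n * ((j:ℝ) + (r:ℝ)/l)^n := by
      intro j
      rw [hf]
      simp only []
      rw [← mul_pow]
      congr 1
      field_simp
    have hgk : g k = l^n * ∑ j ∈ range (k+1),
        (k.choose j : ℝ) * (-1:ℝ)^(k-j) * ((j:ℝ) + (r:ℝ)/l)^n := by
      rw [hinv, Finset.mul_sum]
      refine Finset.sum_congr rfl (fun j _ => ?_)
      rw [hfj j]
      ring
    have hfac : ((k.factorial : ℕ) : ℝ) ≠ 0 := Nat.cast_ne_zero.mpr (Nat.factorial_ne_zero k)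
    have hlk : (l:ℝ)^k ≠ 0 := pow_ne_zero k hl
    have hpow : l^(n-k) * l^k = l^n := by
      rw [← pow_add]
      congr 1
      omega
    apply mul_right_cancel₀ (mul_ne_zero hlk hfac)
    have hSk : S n k * (l^k * (k.factorial : ℝ))
        = l^n * ∑ j ∈ range (k+1), (k.choose j : ℝ) * (-1:ℝ)^(k-j) * ((j:ℝ) + (r:ℝ)/l)^n := by
      rw [← hgk, hg]
      ring
    rw [hSk]
    rw [← hpow]
    field_simp
    simp_rw [mul_comm l]
  · intro hn
    rw [vanish k n hn ((r:ℝ)/l), mul_zero]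
end

section
/- For nonnegative integers n, k, r with n ≥ k, S₂_λ^{(r)}(n,k) = Σ_{l=k}^{n} C(n,l) S₂_λ(l,k) r^{n-l}, where S₂_λ(l,k) are the λ-analogues of Stirling numbers of the second kind. -/
open Finset PowerSeries

lemma ffact_eq_zero (l : ℝ) (m : ℕ) : ∀ k : ℕ, m < k → ffact l (m * l) k = 0 := by
  intro k
  induction k with
  | zero => omega
  | succ j ih =>
    intro hm
    rcases Nat.lt_or_ge m j with h | h
    · simp [ffact, ih h]
    · have : m = j := by omega
      subst this
      simp [ffact]

lemma ffact_ne_zero (l : ℝ) (hl : l ≠ 0) (m : ℕ) :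
    ∀ k : ℕ, k ≤ m → ffact l (m * l) k ≠ 0 := by
  intro k
  induction k with
  | zero => simp [ffact]
  | succ j ih =>
    intro hm
    have h1 : ffact l (m * l) j ≠ 0 := ih (by omega)
    have h2 : (m : ℝ) * l - j * l ≠ 0 := by
      have : (m : ℝ) ≠ j := by
        exact_mod_cast Nat.ne_of_gt (by omega)
      intro h
      apply this
      have := sub_eq_zero.mp h
      exact mul_right_cancel₀ hl this
    simpa [ffact] using mul_ne_zero h1 h2

lemma ffact_unique (l : ℝ) (hl : l ≠ 0) (N : ℕ) (d : ℕ → ℝ)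
    (h : ∀ x : ℝ, ∑ k ∈ range N, d k * ffact l x k = 0) :
    ∀ m, m < N → d m = 0 := by
  intro m
  induction m using Nat.strong_induction_on with
  | _ m ih =>
    intro hmN
    have hx := h ((m : ℝ) * l)
    rw [Finset.sum_eq_single m] at hx
    · have := ffact_ne_zero l hl m m le_rfl
      exact (mul_eq_zero.mp hx).resolve_right this
    · intro b hb hbm
      rcases Nat.lt_or_ge b m with hc | hc
      · simp [ih b hc (by omega)]
      · have : m < b := by omega
        simp [ffact_eq_zero l m b this]
    · intro hm
      exact absurd (Finset.mem_range.mpr hmN) hm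

/-- Theorem 3: `S₂_λ^{(r)}(n,k) = ∑_{l=k}^n C(n,l) S₂_λ(l,k) r^{n-l}`. -/
theorem stmt2 (l : ℝ) (hl : l ≠ 0) (r : ℕ) (S Sr : ℕ → ℕ → ℝ)
    (hS : ∀ (n : ℕ) (x : ℝ), x ^ n = ∑ k ∈ range (n + 1), S n k * ffact l x k)
    (hSr : ∀ (n : ℕ) (x : ℝ), (x + r) ^ n = ∑ k ∈ range (n + 1), Sr n k * ffact l x k)
    (n k : ℕ) (hkn : k ≤ n) :
    Sr n k = ∑ j ∈ Icc k n, (n.choose j : ℝ) * S j k * (r : ℝ) ^ (n - j) := by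
  have key : ∀ x : ℝ, ∑ m ∈ range (n + 1),
      (Sr n m - ∑ j ∈ Icc m n, (n.choose j : ℝ) * S j m * (r : ℝ) ^ (n - j)) *
        ffact l x m = 0 := by
    intro x
    have h1 : (x + r) ^ n =
        ∑ j ∈ range (n + 1), x ^ j * (r : ℝ) ^ (n - j) * (n.choose j : ℝ) :=
      add_pow x (r : ℝ) n
    have h2 : ∀ j : ℕ, x ^ j * (r : ℝ) ^ (n - j) * (n.choose j : ℝ) =
        ∑ m ∈ range (j + 1),
          ((n.choose j : ℝ) * S j m * (r : ℝ) ^ (n - j)) * ffact l x m := by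
      intro j
      rw [hS j x, Finset.sum_mul, Finset.sum_mul]
      apply Finset.sum_congr rfl
      intro m _
      ring
    have h3 : (x + r) ^ n = ∑ m ∈ range (n + 1),
        (∑ j ∈ Icc m n, (n.choose j : ℝ) * S j m * (r : ℝ) ^ (n - j)) * ffact l x m := by
      rw [h1]
      simp_rw [h2, Finset.sum_mul]
      rw [Finset.sum_comm' (t' := range (n + 1)) (s' := fun m => Icc m n)]
      intro j m
      simp only [Finset.mem_range, Finset.mem_Icc]
      omega
    simp_rw [sub_mul, Finset.sum_sub_distrib]
    rw [← hSr n x, ← h3, sub_self]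
  have := ffact_unique l hl (n + 1)
    (fun m => Sr n m - ∑ j ∈ Icc m n, (n.choose j : ℝ) * S j m * (r : ℝ) ^ (n - j))
    key k (by omega)
  linarith [this]
end

section
/- For nonnegative integers m, n, k with n ≥ m + k, we have C(m+k, k) · S₂_λ^{(r)}(n, k+m) = Σ_{l=k}^{n-m} C(n,l) S₂_λ(l,k) S₂_λ^{(r)}(n-l, m). -/
open Finset PowerSeries

lemma ffact_grid (l : ℝ) (j k : ℕ) : ffact l ((j:ℝ)*l) k = l^k * (j.descFactorial k : ℝ) := by
  induction k with
  | zero => simp [ffact]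
  | succ k ih =>
      rw [ffact, ih, Nat.descFactorial_succ]
      rcases le_or_gt k j with hkj | hkj
      · push_cast [Nat.cast_sub hkj]
        ring
      · have h1 : j.descFactorial k = 0 := Nat.descFactorial_eq_zero_iff_lt.2 hkj
        have h2 : j - k = 0 := by omega
        simp [h1, h2]

lemma neg_one_pow_sub {d t : ℕ} (ht : t ≤ d) : (-1:ℝ)^(d-t) = (-1)^d * (-1)^t := by
  have h1 : (-1:ℝ)^t * (-1)^t = 1 := by
    rw [← pow_add]; exact Even.neg_one_pow ⟨t, rfl⟩
  have h2 : (-1:ℝ)^(d-t) * (-1)^t = (-1)^d := by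
    rw [← pow_add]; congr 1; omega
  calc (-1:ℝ)^(d-t) = (-1:ℝ)^(d-t) * ((-1:ℝ)^t * (-1:ℝ)^t) := by rw [h1, mul_one]
    _ = ((-1:ℝ)^(d-t) * (-1:ℝ)^t) * (-1:ℝ)^t := by ring
    _ = (-1)^d * (-1)^t := by rw [h2]

lemma alt_sum (d : ℕ) (hd : d ≠ 0) :
    ∑ t ∈ range (d+1), (-1:ℝ)^(d-t) * (d.choose t) = 0 := by
  have h := Int.alternating_sum_range_choose_of_ne hd
  have h' : ∑ t ∈ range (d+1), (-1:ℝ)^t * (d.choose t) = 0 := by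
    have := congrArg (Int.cast : ℤ → ℝ) h
    push_cast at this
    simpa using this
  calc ∑ t ∈ range (d+1), (-1:ℝ)^(d-t) * (d.choose t)
      = (-1:ℝ)^d * ∑ t ∈ range (d+1), (-1:ℝ)^t * (d.choose t) := by
        rw [Finset.mul_sum]
        refine Finset.sum_congr rfl fun t ht => ?_
        rw [neg_one_pow_sub (by simpa [Nat.lt_succ_iff] using ht)]
        ring
    _ = 0 := by rw [h', mul_zero]

lemma diffD (g : ℕ → ℝ) (m : ℕ) :
    ∑ i ∈ range (m+2), (-1:ℝ)^(m+1-i) * ((m+1).choose i) * g i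
      = ∑ i ∈ range (m+1), (-1:ℝ)^(m-i) * (m.choose i) * (g (i+1) - g i) := by
  rw [Finset.sum_range_succ']
  have step : ∀ i, (-1:ℝ)^(m+1-(i+1)) * ((m+1).choose (i+1)) * g (i+1)
      = (-1:ℝ)^(m-i) * (m.choose i) * g (i+1) + (-1:ℝ)^(m-i) * (m.choose (i+1)) * g (i+1) := by
    intro i
    have h1 : m + 1 - (i+1) = m - i := by omega
    rw [h1, Nat.choose_succ_succ]
    push_cast
    ring
  rw [Finset.sum_congr rfl fun i _ => step i, Finset.sum_add_distrib]
  have h3 : ∑ i ∈ range (m+1), (-1:ℝ)^(m-i) * (m.choose (i+1)) * g (i+1)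
      = ∑ i ∈ range m, (-1:ℝ)^(m-i) * (m.choose (i+1)) * g (i+1) := by
    rw [Finset.sum_range_succ]
    simp
  have h4 : ∑ i ∈ range m, (-1:ℝ)^(m-i) * (m.choose (i+1)) * g (i+1)
      = -∑ i ∈ range m, (-1:ℝ)^(m-(i+1)) * (m.choose (i+1)) * g (i+1) := by
    rw [← Finset.sum_neg_distrib]
    refine Finset.sum_congr rfl fun i hi => ?_
    have hi' : i < m := Finset.mem_range.1 hi
    have : m - i = (m - (i+1)) + 1 := by omega
    rw [this, pow_succ]
    ring
  have h5 : ∑ i ∈ range (m+1), (-1:ℝ)^(m-i) * (m.choose i) * g i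
      = ∑ i ∈ range m, (-1:ℝ)^(m-(i+1)) * (m.choose (i+1)) * g (i+1)
        + (-1:ℝ)^m * g 0 := by
    rw [Finset.sum_range_succ']
    simp
  have h6 : (-1:ℝ)^(m+1-0) * ((m+1).choose 0) * g 0 = -((-1:ℝ)^m * g 0) := by
    simp [pow_succ]
  rw [h3, h4, h6]
  have : ∑ i ∈ range (m+1), (-1:ℝ)^(m-i) * (m.choose i) * (g (i+1) - g i)
      = ∑ i ∈ range (m+1), (-1:ℝ)^(m-i) * (m.choose i) * g (i+1)
        - ∑ i ∈ range (m+1), (-1:ℝ)^(m-i) * (m.choose i) * g i := by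
    rw [← Finset.sum_sub_distrib]
    refine Finset.sum_congr rfl fun i _ => by ring
  rw [this, h5]
  ring

lemma diff_pow : ∀ (m t : ℕ), t < m → ∀ x : ℝ,
    ∑ i ∈ range (m+1), (-1:ℝ)^(m-i) * (m.choose i) * (x + i)^t = 0 := by
  intro m
  induction m with
  | zero => intro t ht; omega
  | succ m ih =>
      intro t ht x
      rw [show m + 1 + 1 = m + 2 from rfl, diffD (fun i => (x + i)^t) m]
      have hdiff : ∀ i : ℕ, (x + ((i:ℝ)+1))^t - (x + i)^t
          = ∑ s ∈ range t, (x + i)^s * (t.choose s) := by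
        intro i
        have := add_pow (x + (i:ℝ)) 1 t
        simp only [one_pow, mul_one] at this
        have h2 : (x + ((i:ℝ)+1))^t = ∑ s ∈ range (t+1), (x + i)^s * (t.choose s) := by
          rw [← this]; ring_nf
        rw [h2, Finset.sum_range_succ, Nat.choose_self]
        push_cast; ring
      calc ∑ i ∈ range (m+1), (-1:ℝ)^(m-i) * (m.choose i) * ((x + ((i:ℕ)+1:ℕ))^t - (x + i)^t)
          = ∑ i ∈ range (m+1), ∑ s ∈ range t,
              (t.choose s : ℝ) * ((-1:ℝ)^(m-i) * (m.choose i) * (x + i)^s) := by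
            refine Finset.sum_congr rfl fun i _ => ?_
            push_cast
            rw [hdiff i, Finset.mul_sum]
            refine Finset.sum_congr rfl fun s _ => by ring
        _ = ∑ s ∈ range t, (t.choose s : ℝ) *
              ∑ i ∈ range (m+1), (-1:ℝ)^(m-i) * (m.choose i) * (x + i)^s := by
            rw [Finset.sum_comm]
            refine Finset.sum_congr rfl fun s _ => by rw [Finset.mul_sum]
        _ = 0 := by
            refine Finset.sum_eq_zero fun s hs => ?_
            have hsm : s < m := by
              have := Finset.mem_range.1 hs; omega
            rw [ih s hsm x, mul_zero]

lemma inv_lemma (N : ℕ) (c f : ℕ → ℝ)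
    (hcf : ∀ j : ℕ, f j = ∑ k ∈ range (N+1), c k * (j.descFactorial k : ℝ)) :
    ∀ k ≤ N, (∑ j ∈ range (k+1), (-1:ℝ)^(k-j) * (k.choose j) * f j)
      = c k * (k.factorial) := by
  intro k hk
  have swap : (∑ j ∈ range (k+1), (-1:ℝ)^(k-j) * (k.choose j) * f j)
      = ∑ k' ∈ range (N+1), c k' *
          ∑ j ∈ range (k+1), (-1:ℝ)^(k-j) * (k.choose j) * (j.descFactorial k' : ℝ) := by
    calc (∑ j ∈ range (k+1), (-1:ℝ)^(k-j) * (k.choose j) * f j)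
        = ∑ j ∈ range (k+1), ∑ k' ∈ range (N+1),
            c k' * ((-1:ℝ)^(k-j) * (k.choose j) * (j.descFactorial k' : ℝ)) := by
          refine Finset.sum_congr rfl fun j _ => ?_
          rw [hcf j, Finset.mul_sum]
          refine Finset.sum_congr rfl fun k' _ => by ring
      _ = _ := by
          rw [Finset.sum_comm]
          exact Finset.sum_congr rfl fun k' _ => by rw [Finset.mul_sum]
  rw [swap]
  rw [Finset.sum_eq_single k]
  · have : ∑ j ∈ range (k+1), (-1:ℝ)^(k-j) * (k.choose j) * (j.descFactorial k : ℝ)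
        = (k.factorial : ℝ) := by
      rw [Finset.sum_range_succ]
      have h1 : ∑ j ∈ range k, (-1:ℝ)^(k-j) * (k.choose j) * (j.descFactorial k : ℝ) = 0 := by
        refine Finset.sum_eq_zero fun j hj => ?_
        have : j.descFactorial k = 0 :=
          Nat.descFactorial_eq_zero_iff_lt.2 (Finset.mem_range.1 hj)
        simp [this]
      rw [h1, Nat.descFactorial_self]
      simp
    rw [this]
  · intro k' hk' hne
    rcases lt_or_gt_of_ne hne with hlt | hgt
    · have hT : ∑ j ∈ range (k+1), (-1:ℝ)^(k-j) * (k.choose j) * (j.descFactorial k' : ℝ) = 0 := by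
        have hsub : Finset.Ico k' (k+1) ⊆ range (k+1) := by
          intro j hj; rw [Finset.mem_range]; exact (Finset.mem_Ico.1 hj).2
        rw [← Finset.sum_subset hsub (by
          intro j hj hj2
          have hjk : j < k' := by
            rw [Finset.mem_range] at hj; rw [Finset.mem_Ico] at hj2; omega
          have : j.descFactorial k' = 0 := Nat.descFactorial_eq_zero_iff_lt.2 hjk
          simp [this])]
        rw [Finset.sum_Ico_eq_sum_range]
        have hd : k + 1 - k' = (k - k') + 1 := by omega
        rw [hd]
        set d := k - k' with hdd
        have hcalc : ∀ t ∈ range (d+1),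
            (-1:ℝ)^(k-(k'+t)) * (k.choose (k'+t)) * (((k'+t).descFactorial k' : ℕ) : ℝ)
            = ((k.choose k' : ℝ) * (k'.factorial : ℝ)) * ((-1:ℝ)^(d-t) * ((d.choose t : ℕ):ℝ)) := by
          intro t ht
          have htd : t ≤ d := by have := Finset.mem_range.1 ht; omega
          have hkt : k' + t ≤ k := by omega
          have hchoose : k.choose (k'+t) * (k'+t).choose k' = k.choose k' * (k-k').choose t := by
            have := Nat.choose_mul (n := k) (k := k'+t) (s := k') (Nat.le_add_right _ _)
            simpa [Nat.add_sub_cancel_left] using this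
          have hdF : (k'+t).descFactorial k' = k'.factorial * (k'+t).choose k' :=
            Nat.descFactorial_eq_factorial_mul_choose _ _
          have hexp : k - (k'+t) = d - t := by omega
          rw [hdF, hexp]
          push_cast
          have : (k.choose (k'+t) : ℝ) * ((k'+t).choose k') = (k.choose k' : ℝ) * ((k-k').choose t) := by
            exact_mod_cast congrArg (Nat.cast : ℕ → ℝ) hchoose
          calc (-1:ℝ)^(d-t) * (k.choose (k'+t)) * ((k'.factorial : ℝ) * ((k'+t).choose k'))
              = (-1:ℝ)^(d-t) * (k'.factorial : ℝ) * ((k.choose (k'+t) : ℝ) * ((k'+t).choose k')) := by ring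
            _ = (-1:ℝ)^(d-t) * (k'.factorial : ℝ) * ((k.choose k' : ℝ) * ((k-k').choose t)) := by rw [this]
            _ = ((k.choose k' : ℝ) * (k'.factorial : ℝ)) * ((-1:ℝ)^(d-t) * ((d.choose t : ℕ):ℝ)) := by
                rw [← hdd]; ring
        rw [Finset.sum_congr rfl hcalc, ← Finset.mul_sum, alt_sum d (by omega), mul_zero]
      rw [hT, mul_zero]
    · have hT : ∑ j ∈ range (k+1), (-1:ℝ)^(k-j) * (k.choose j) * (j.descFactorial k' : ℝ) = 0 := by
        refine Finset.sum_eq_zero fun j hj => ?_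
        have : j.descFactorial k' = 0 := by
          refine Nat.descFactorial_eq_zero_iff_lt.2 ?_
          have := Finset.mem_range.1 hj; omega
        simp [this]
      rw [hT, mul_zero]
  · intro hknotin
    exact absurd (Finset.mem_range.2 (by omega)) hknotin

lemma vand (k m : ℕ) (G : ℕ → ℝ) :
    ∑ i ∈ range (k+1), ∑ j ∈ range (m+1), (k.choose i : ℝ) * (m.choose j) * G (i+j)
      = ∑ s ∈ range (k+m+1), ((k+m).choose s : ℝ) * G s := by
  classical
  set H : ℕ × ℕ → ℝ := fun p => (k.choose p.1 : ℝ) * (m.choose p.2) * G (p.1 + p.2) with hH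
  have hrhs : ∑ s ∈ range (k+m+1), ((k+m).choose s : ℝ) * G s
      = ∑ s ∈ range (k+m+1), ∑ p ∈ Finset.HasAntidiagonal.antidiagonal s, H p := by
    refine Finset.sum_congr rfl fun s _ => ?_
    rw [Nat.add_choose_eq k m s]
    push_cast
    rw [Finset.sum_mul]
    refine Finset.sum_congr rfl fun p hp => ?_
    have : p.1 + p.2 = s := Finset.HasAntidiagonal.mem_antidiagonal.1 hp
    rw [hH]; simp only []
    rw [this]
  rw [hrhs]
  have hdisj : (↑(range (k+m+1)) : Set ℕ).PairwiseDisjoint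
      (fun s => Finset.HasAntidiagonal.antidiagonal s) := by
    intro a _ b _ hab
    simp only [Function.onFun]
    rw [Finset.disjoint_left]
    intro p hpa hpb
    exact hab ((Finset.HasAntidiagonal.mem_antidiagonal.1 hpa).symm.trans (Finset.HasAntidiagonal.mem_antidiagonal.1 hpb))
  rw [← Finset.sum_biUnion hdisj]
  have hbox : ∑ i ∈ range (k+1), ∑ j ∈ range (m+1),
      (k.choose i : ℝ) * (m.choose j) * G (i+j)
      = ∑ p ∈ range (k+1) ×ˢ range (m+1), H p := by
    rw [Finset.sum_product]
  rw [hbox]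
  refine Finset.sum_subset ?_ ?_
  · intro p hp
    simp only [Finset.mem_product, Finset.mem_range] at hp
    simp only [Finset.mem_biUnion, Finset.mem_range]
    exact ⟨p.1 + p.2, by omega, Finset.HasAntidiagonal.mem_antidiagonal.2 rfl⟩
  · intro p hp hp2
    simp only [Finset.mem_product, Finset.mem_range] at hp2
    have : k < p.1 ∨ m < p.2 := by omega
    rcases this with h | h
    · have : k.choose p.1 = 0 := Nat.choose_eq_zero_of_lt h
      simp [hH, this]
    · have : m.choose p.2 = 0 := Nat.choose_eq_zero_of_lt h
      simp [hH, this]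

/-- Theorem 5: `C(m+k,k) S₂_λ^{(r)}(n,k+m) = ∑_{l=k}^{n-m} C(n,l) S₂_λ(l,k) S₂_λ^{(r)}(n-l,m)`. -/
theorem stmt4 (l : ℝ) (hl : l ≠ 0) (r : ℕ) (S Sr : ℕ → ℕ → ℝ)
    (hS : ∀ (n : ℕ) (x : ℝ), x ^ n = ∑ k ∈ range (n + 1), S n k * ffact l x k)
    (hSr : ∀ (n : ℕ) (x : ℝ), (x + r) ^ n = ∑ k ∈ range (n + 1), Sr n k * ffact l x k)
    (m n k : ℕ) (h : m + k ≤ n) :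
    ((m + k).choose k : ℝ) * Sr n (k + m) =
      ∑ j ∈ Icc k (n - m), (n.choose j : ℝ) * S j k * Sr (n - j) m := by
  have hSf : ∀ nn kk : ℕ, kk ≤ nn →
      S nn kk * l^kk * (kk.factorial : ℝ)
        = ∑ j ∈ range (kk+1), (-1:ℝ)^(kk-j) * (kk.choose j) * ((j:ℝ)*l)^nn := by
    intro nn kk hkkn
    have hcf : ∀ j : ℕ, ((j:ℝ)*l)^nn
        = ∑ k' ∈ range (nn+1), (S nn k' * l^k') * (j.descFactorial k' : ℝ) := by
      intro j
      rw [hS nn ((j:ℝ)*l)]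
      exact Finset.sum_congr rfl fun k' _ => by rw [ffact_grid]; ring
    have := inv_lemma nn (fun k' => S nn k' * l^k') (fun j => ((j:ℝ)*l)^nn) hcf kk hkkn
    simpa [mul_assoc] using this.symm
  have hSrf : ∀ nn kk : ℕ, kk ≤ nn →
      Sr nn kk * l^kk * (kk.factorial : ℝ)
        = ∑ j ∈ range (kk+1), (-1:ℝ)^(kk-j) * (kk.choose j) * ((j:ℝ)*l + r)^nn := by
    intro nn kk hkkn
    have hcf : ∀ j : ℕ, ((j:ℝ)*l + r)^nn
        = ∑ k' ∈ range (nn+1), (Sr nn k' * l^k') * (j.descFactorial k' : ℝ) := by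
      intro j
      rw [hSr nn ((j:ℝ)*l)]
      exact Finset.sum_congr rfl fun k' _ => by rw [ffact_grid]; ring
    have := inv_lemma nn (fun k' => Sr nn k' * l^k') (fun j => ((j:ℝ)*l + r)^nn) hcf kk hkkn
    simpa [mul_assoc] using this.symm
  set A : ℕ → ℝ := fun j => ∑ i ∈ range (k+1), (-1:ℝ)^(k-i) * (k.choose i) * ((i:ℝ)*l)^j
    with hA
  set B : ℕ → ℝ := fun j =>
      ∑ i ∈ range (m+1), (-1:ℝ)^(m-i) * (m.choose i) * ((i:ℝ)*l + r)^(n-j) with hB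
  set G : ℕ → ℝ := fun s => (-1:ℝ)^(k+m-s) * ((s:ℝ)*l + r)^n with hG
  have hc : (l^k * (k.factorial:ℝ) * (l^m * (m.factorial:ℝ))) ≠ 0 := by
    apply mul_ne_zero (mul_ne_zero (pow_ne_zero _ hl) ?_) (mul_ne_zero (pow_ne_zero _ hl) ?_)
    · exact_mod_cast Nat.factorial_ne_zero k
    · exact_mod_cast Nat.factorial_ne_zero m
  apply mul_right_cancel₀ hc
  have hLHS : (((m + k).choose k : ℝ) * Sr n (k + m)) * (l^k * (k.factorial:ℝ) * (l^m * (m.factorial:ℝ)))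
      = ∑ s ∈ range (k+m+1), ((k+m).choose s : ℝ) * G s := by
    have hfact : ((m+k).choose k : ℝ) * (k.factorial:ℝ) * (m.factorial:ℝ) = ((k+m).factorial : ℝ) := by
      have h1 := Nat.choose_mul_factorial_mul_factorial (show k ≤ m + k by omega)
      have h2 : m + k - k = m := by omega
      rw [h2] at h1
      have : ((m+k).choose k * k.factorial * m.factorial : ℕ) = ((m+k).factorial : ℕ) := h1
      have := congrArg (Nat.cast : ℕ → ℝ) this
      push_cast at this
      rw [show k + m = m + k by omega]
      exact_mod_cast this
    have hmain := hSrf n (k+m) (by omega)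
    calc (((m + k).choose k : ℝ) * Sr n (k + m)) * (l^k * (k.factorial:ℝ) * (l^m * (m.factorial:ℝ)))
        = (((m+k).choose k : ℝ) * (k.factorial:ℝ) * (m.factorial:ℝ)) * (Sr n (k+m) * (l^k * l^m)) := by
          ring
      _ = ((k+m).factorial : ℝ) * (Sr n (k+m) * l^(k+m)) := by rw [hfact, ← pow_add]
      _ = Sr n (k+m) * l^(k+m) * ((k+m).factorial : ℝ) := by ring
      _ = ∑ j ∈ range (k+m+1), (-1:ℝ)^(k+m-j) * ((k+m).choose j) * ((j:ℝ)*l + r)^n := hmain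
      _ = ∑ s ∈ range (k+m+1), ((k+m).choose s : ℝ) * G s := by
          refine Finset.sum_congr rfl fun s _ => ?_
          rw [hG]
          ring
  rw [hLHS]
  have hstep1 : (∑ j ∈ Icc k (n - m), (n.choose j : ℝ) * S j k * Sr (n - j) m)
        * (l^k * (k.factorial:ℝ) * (l^m * (m.factorial:ℝ)))
      = ∑ j ∈ Icc k (n-m), (n.choose j : ℝ) * A j * B j := by
    rw [Finset.sum_mul]
    refine Finset.sum_congr rfl fun j hj => ?_
    rw [Finset.mem_Icc] at hj
    have hkj : k ≤ j := hj.1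
    have hmj : m ≤ n - j := by omega
    calc (n.choose j : ℝ) * S j k * Sr (n - j) m * (l^k * (k.factorial:ℝ) * (l^m * (m.factorial:ℝ)))
        = (n.choose j : ℝ) * (S j k * l^k * (k.factorial:ℝ)) * (Sr (n-j) m * l^m * (m.factorial:ℝ)) := by
          ring
      _ = (n.choose j : ℝ) * A j * B j := by rw [hSf j k hkj, hSrf (n-j) m hmj, hA, hB]
  rw [hstep1]
  have hstep2 : ∑ j ∈ Icc k (n-m), (n.choose j : ℝ) * A j * B j
      = ∑ j ∈ range (n+1), (n.choose j : ℝ) * A j * B j := by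
    refine Finset.sum_subset ?_ ?_
    · intro j hj
      rw [Finset.mem_Icc] at hj
      rw [Finset.mem_range]
      omega
    · intro j hj hj2
      rw [Finset.mem_range] at hj
      rw [Finset.mem_Icc] at hj2
      rcases (by omega : j < k ∨ (n - m < j ∧ j ≤ n)) with hjk | hjm
      · have hAz : A j = 0 := by
          have : A j = (∑ i ∈ range (k+1), (-1:ℝ)^(k-i) * (k.choose i) * ((0:ℝ) + i)^j) * l^j := by
            rw [hA, Finset.sum_mul]
            refine Finset.sum_congr rfl fun i _ => ?_
            rw [mul_pow]
            ring
          rw [this, diff_pow k j hjk 0, zero_mul]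
        rw [hAz]; ring
      · have hBz : B j = 0 := by
          have hx : ∀ i : ℕ, ((i:ℝ)*l + r) = l * ((r:ℝ)/l + i) := by
            intro i; field_simp; ring
          have : B j = (∑ i ∈ range (m+1),
              (-1:ℝ)^(m-i) * (m.choose i) * ((r:ℝ)/l + i)^(n-j)) * l^(n-j) := by
            rw [hB, Finset.sum_mul]
            refine Finset.sum_congr rfl fun i _ => ?_
            rw [hx i, mul_pow]
            ring
          rw [this, diff_pow m (n-j) (by omega) ((r:ℝ)/l), zero_mul]
        rw [hBz]; ring
  rw [hstep2]
  symm
  calc ∑ j ∈ range (n+1), (n.choose j : ℝ) * A j * B j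
      = ∑ j ∈ range (n+1), ∑ i ∈ range (k+1), ∑ i' ∈ range (m+1),
          ((-1:ℝ)^(k-i) * (k.choose i)) * ((-1:ℝ)^(m-i') * (m.choose i')) *
            (((i:ℝ)*l)^j * (((i':ℝ)*l + r)^(n-j)) * (n.choose j)) := by
        refine Finset.sum_congr rfl fun j _ => ?_
        rw [show (n.choose j : ℝ) * A j * B j = (A j * B j) * (n.choose j) from by ring,
          hA, hB, Finset.sum_mul_sum, Finset.sum_mul]
        refine Finset.sum_congr rfl fun i _ => ?_
        rw [Finset.sum_mul]
        exact Finset.sum_congr rfl fun i' _ => by ring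
    _ = ∑ i ∈ range (k+1), ∑ i' ∈ range (m+1),
          ((-1:ℝ)^(k-i) * (k.choose i)) * ((-1:ℝ)^(m-i') * (m.choose i')) *
            ∑ j ∈ range (n+1), ((i:ℝ)*l)^j * (((i':ℝ)*l + r)^(n-j)) * (n.choose j) := by
        rw [Finset.sum_comm]
        refine Finset.sum_congr rfl fun i _ => ?_
        rw [Finset.sum_comm]
        refine Finset.sum_congr rfl fun i' _ => ?_
        rw [Finset.mul_sum]
    _ = ∑ i ∈ range (k+1), ∑ i' ∈ range (m+1), (k.choose i : ℝ) * (m.choose i') * G (i+i') := by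
        refine Finset.sum_congr rfl fun i hi => Finset.sum_congr rfl fun i' hi' => ?_
        rw [← add_pow]
        have hik : i ≤ k := by have := Finset.mem_range.1 hi; omega
        have him : i' ≤ m := by have := Finset.mem_range.1 hi'; omega
        have h1 : ((i:ℝ)*l + ((i':ℝ)*l + r)) = (((i+i' : ℕ)):ℝ)*l + r := by push_cast; ring
        have hsign : (-1:ℝ)^(k-i) * (-1:ℝ)^(m-i') = (-1:ℝ)^(k+m-(i+i')) := by
          rw [← pow_add]; congr 1; omega
        rw [h1, hG]
        calc ((-1:ℝ)^(k-i) * (k.choose i)) * ((-1:ℝ)^(m-i') * (m.choose i')) *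
              ((((i+i' : ℕ)):ℝ)*l + r)^n
            = (k.choose i : ℝ) * (m.choose i') *
              (((-1:ℝ)^(k-i) * (-1:ℝ)^(m-i')) * ((((i+i' : ℕ)):ℝ)*l + r)^n) := by ring
          _ = (k.choose i : ℝ) * (m.choose i') *
              ((-1:ℝ)^(k+m-(i+i')) * ((((i+i' : ℕ)):ℝ)*l + r)^n) := by rw [hsign]
    _ = ∑ s ∈ range (k+m+1), ((k+m).choose s : ℝ) * G s := vand k m G
end

section
/- For nonnegative integers n, k, r with n ≥ k, S₂_λ(n,k) = Σ_{l=k}^{n} C(n,l) S₂_λ^{(r)}(l,k) (-1)^{n-l} r^{n-l}. -/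
open Finset PowerSeries

lemma ffact_eq_prod (l x : ℝ) (n : ℕ) :
    ffact l x n = ∏ i ∈ range n, (x - i * l) := by
  induction n with
  | zero => simp [ffact]
  | succ n ih => rw [ffact, ih, Finset.prod_range_succ]

lemma ffact_eval_zero (l : ℝ) (m k : ℕ) (hmk : m < k) :
    ffact l ((m : ℝ) * l) k = 0 := by
  rw [ffact_eq_prod]
  apply Finset.prod_eq_zero (Finset.mem_range.mpr hmk)
  ring

lemma ffact_eval_ne_zero (l : ℝ) (hl : l ≠ 0) (m : ℕ) :
    ffact l ((m : ℝ) * l) m ≠ 0 := by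
  rw [ffact_eq_prod]
  rw [Finset.prod_ne_zero_iff]
  intro i hi
  have him : i < m := Finset.mem_range.mp hi
  have : ((m : ℝ) - i) ≠ 0 := by
    have : (i : ℝ) < m := by exact_mod_cast him
    linarith
  intro h
  apply this
  have : ((m : ℝ) - i) * l = 0 := by linarith [h]; 
  rcases mul_eq_zero.mp this with h' | h'
  · exact h'
  · exact absurd h' hl

lemma uniq (l : ℝ) (hl : l ≠ 0) (N : ℕ) (c : ℕ → ℝ)
    (h : ∀ x : ℝ, ∑ k ∈ range N, c k * ffact l x k = 0) :
    ∀ m, m < N → c m = 0 := by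
  intro m
  induction m using Nat.strong_induction_on with
  | _ m ih =>
    intro hmN
    have hx := h ((m : ℝ) * l)
    rw [Finset.sum_eq_single m] at hx
    · have := ffact_eval_ne_zero l hl m
      rcases mul_eq_zero.mp hx with h' | h'
      · exact h'
      · exact absurd h' this
    · intro k hk hkm
      rcases lt_or_gt_of_ne hkm with hlt | hgt
      · rw [ih k hlt (lt_trans hlt hmN)]; ring
      · rw [ffact_eval_zero l m k hgt]; ring
    · intro hm; exact absurd (Finset.mem_range.mpr hmN) hm

/-- Theorem 6: `S₂_λ(n,k) = ∑_{l=k}^n C(n,l) S₂_λ^{(r)}(l,k) (-1)^{n-l} r^{n-l}`. -/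
theorem stmt5 (l : ℝ) (hl : l ≠ 0) (r : ℕ) (S Sr : ℕ → ℕ → ℝ)
    (hS : ∀ (n : ℕ) (x : ℝ), x ^ n = ∑ k ∈ range (n + 1), S n k * ffact l x k)
    (hSr : ∀ (n : ℕ) (x : ℝ), (x + r) ^ n = ∑ k ∈ range (n + 1), Sr n k * ffact l x k)
    (n k : ℕ) (hkn : k ≤ n) :
    S n k = ∑ j ∈ Icc k n,
      (n.choose j : ℝ) * Sr j k * (-1 : ℝ) ^ (n - j) * (r : ℝ) ^ (n - j) := by
  set T : ℕ → ℝ := fun k => ∑ j ∈ Icc k n,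
      (n.choose j : ℝ) * Sr j k * (-1 : ℝ) ^ (n - j) * (r : ℝ) ^ (n - j) with hT
  have key : ∀ x : ℝ, ∑ m ∈ range (n + 1), (S n m - T m) * ffact l x m = 0 := by
    intro x
    have h1 : ∑ m ∈ range (n + 1), T m * ffact l x m = x ^ n := by
      have swap : ∑ m ∈ range (n + 1), ∑ j ∈ Icc m n,
          ((n.choose j : ℝ) * (-1 : ℝ) ^ (n - j) * (r : ℝ) ^ (n - j)) *
            (Sr j m * ffact l x m)
          = ∑ j ∈ range (n + 1), ∑ m ∈ range (j + 1),
          ((n.choose j : ℝ) * (-1 : ℝ) ^ (n - j) * (r : ℝ) ^ (n - j)) *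
            (Sr j m * ffact l x m) := by
        apply Finset.sum_comm'
        intro a b
        simp only [Finset.mem_range, Finset.mem_Icc]
        omega
      calc ∑ m ∈ range (n + 1), T m * ffact l x m
          = ∑ m ∈ range (n + 1), ∑ j ∈ Icc m n,
            ((n.choose j : ℝ) * (-1 : ℝ) ^ (n - j) * (r : ℝ) ^ (n - j)) *
              (Sr j m * ffact l x m) := by
            apply Finset.sum_congr rfl
            intro m _
            rw [hT, Finset.sum_mul]
            apply Finset.sum_congr rfl
            intro j _
            ring
        _ = ∑ j ∈ range (n + 1),
            ((n.choose j : ℝ) * (-1 : ℝ) ^ (n - j) * (r : ℝ) ^ (n - j)) * (x + r) ^ j := by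
            rw [swap]
            apply Finset.sum_congr rfl
            intro j _
            rw [← Finset.mul_sum, hSr j x]
        _ = x ^ n := by
            have hb := add_pow (x + (r : ℝ)) (-(r : ℝ)) n
            simp only [add_neg_cancel_right] at hb
            rw [hb]
            apply Finset.sum_congr rfl
            intro j hj
            rw [neg_pow]
            ring
    have h2 := hS n x
    simp only [sub_mul, Finset.sum_sub_distrib]
    rw [← h2, h1]
    ring
  have := uniq l hl (n + 1) (fun m => S n m - T m) key k (Nat.lt_succ_of_le hkn)
  linarith [this]
end

section
/- For nonnegative integers n, k with n ≥ k, a positive integer m, and nonnegative integer r, S₂_λ^{(r)}(n,k) / C(k+m, k) = Σ_{l=k}^{n} [C(n,l) / C(l+m, l)] · S₂_λ(l+m, k+m) · B^{(m)}_{n-l}(r/λ) · λ^{n-l}, where B^{(m)}_j(x) are the Bernoulli polynomials of order m. -/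
open Finset PowerSeries

namespace Stmt6Aux

noncomputable def W (l : ℝ) : PowerSeries ℝ :=
  rescale l (PowerSeries.mk fun j => (1 : ℝ) / (j + 1).factorial)

noncomputable def E (l : ℝ) : PowerSeries ℝ := PowerSeries.C l * (PowerSeries.X * W l)

lemma coeff_W (l : ℝ) (n : ℕ) : coeff n (W l) = l ^ n * (1 / (n + 1).factorial) := by
  simp [W, coeff_rescale]

lemma one_add_E (l : ℝ) : (1 : PowerSeries ℝ) + E l = rescale l (exp ℝ) := by
  ext n
  cases n with
  | zero =>
    simp [E, coeff_rescale, coeff_exp]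
  | succ n =>
    simp [E, coeff_rescale, coeff_exp, coeff_succ_X_mul, coeff_W, Nat.factorial_succ]
    push_cast
    ring

lemma X_pow_dvd_mul_E_pow (l : ℝ) (f : PowerSeries ℝ) (k : ℕ) :
    (PowerSeries.X : PowerSeries ℝ) ^ k ∣ f * E l ^ k := by
  refine Dvd.dvd.mul_left ?_ f
  refine pow_dvd_pow_of_dvd ⟨PowerSeries.C l * W l, by rw [E]; ring⟩ k

lemma coeff_mul_E_pow_eq_zero (l : ℝ) (f : PowerSeries ℝ) {k p : ℕ} (hp : p < k) :
    coeff p (f * E l ^ k) = 0 :=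
  PowerSeries.X_pow_dvd_iff.mp (X_pow_dvd_mul_E_pow l f k) p hp

lemma coeff_E_pow_eq_zero (l : ℝ) {k p : ℕ} (hp : p < k) :
    coeff p (E l ^ k) = 0 := by
  have := coeff_mul_E_pow_eq_zero l 1 hp
  simpa using this

lemma ffact_nat_mul (l : ℝ) (N : ℕ) : ∀ k, ffact l ((N : ℝ) * l) k = l ^ k * (N.descFactorial k : ℝ)
  | 0 => by simp [ffact]
  | (k+1) => by
    rw [ffact, ffact_nat_mul l N k, Nat.descFactorial_succ]
    rcases lt_or_ge k N with h | h
    · have : ((N - k : ℕ) : ℝ) = (N : ℝ) - k := by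
        push_cast [Nat.cast_sub h.le]; ring
      push_cast [this]
      ring
    · rcases lt_or_eq_of_le h with h' | h'
      · have : N.descFactorial k = 0 := Nat.descFactorial_eq_zero_iff_lt.mpr h'
        simp [this]
      · have : N.descFactorial (k+1) = 0 := Nat.descFactorial_eq_zero_iff_lt.mpr (by omega)
        subst h'
        simp [this]


noncomputable def ffp (l : ℝ) : ℕ → Polynomial ℝ
  | 0 => 1
  | k + 1 => ffp l k * (Polynomial.X - Polynomial.C ((k : ℝ) * l))

lemma eval_ffp (l x : ℝ) : ∀ k, (ffp l k).eval x = ffact l x k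
  | 0 => by simp [ffp, ffact]
  | (k+1) => by simp [ffp, ffact, eval_ffp l x k]

lemma uniq (l : ℝ) (hl : l ≠ 0) (n : ℕ) (a : ℕ → ℝ)
    (h : ∀ x : ℝ, ∑ k ∈ range (n+1), a k * ffact l x k = 0) :
    ∀ j, j ≤ n → a j = 0 := by
  intro j
  induction j using Nat.strong_induction_on with
  | _ j ih =>
    intro hj
    have h0 := h ((j : ℝ) * l)
    rw [Finset.sum_eq_single_of_mem j (by simp; omega)] at h0
    · rw [ffact_nat_mul, Nat.descFactorial_self] at h0
      have hne : l ^ j * (j.factorial : ℝ) ≠ 0 := by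
        positivity
      rcases mul_eq_zero.mp h0 with h' | h'
      · exact h'
      · exact absurd h' hne
    · intro k hk hkj
      rcases lt_or_gt_of_ne hkj with h' | h'
      · rw [ih k h' (by simp at hk; omega), zero_mul]
      · rw [ffact_nat_mul, Nat.descFactorial_eq_zero_iff_lt.mpr h']
        simp

noncomputable def sig (l ρ : ℝ) (n k : ℕ) : ℝ :=
  (n.factorial : ℝ) * coeff n (rescale ρ (exp ℝ) * E l ^ k) / (l ^ k * k.factorial)

lemma coeff_sum_choose (l ρ : ℝ) (n N : ℕ) :
    ∑ k ∈ range (n+1), (N.choose k : ℝ) * coeff n (rescale ρ (exp ℝ) * E l ^ k)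
      = ((N : ℝ) * l + ρ) ^ n / n.factorial := by
  have hext : ∑ k ∈ range (n+1), (N.choose k : ℝ) * coeff n (rescale ρ (exp ℝ) * E l ^ k)
      = ∑ k ∈ range (n+N+1), (N.choose k : ℝ) * coeff n (rescale ρ (exp ℝ) * E l ^ k) := by
    refine Finset.sum_subset (by apply range_subset_range.mpr; omega) ?_
    intro k hk hk'
    rw [coeff_mul_E_pow_eq_zero l _ (by simp at hk hk' ⊢; omega), mul_zero]
  rw [hext]
  have hpull : ∑ k ∈ range (n+N+1), (N.choose k : ℝ) * coeff n (rescale ρ (exp ℝ) * E l ^ k)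
      = coeff n (rescale ρ (exp ℝ) * ∑ k ∈ range (n+N+1), E l ^ k * (N.choose k : PowerSeries ℝ)) := by
    rw [Finset.mul_sum, map_sum]
    refine Finset.sum_congr rfl fun k _ => ?_
    have : rescale ρ (exp ℝ) * (E l ^ k * (N.choose k : PowerSeries ℝ))
        = (PowerSeries.C (N.choose k : ℝ)) * (rescale ρ (exp ℝ) * E l ^ k) := by
      rw [← map_natCast (PowerSeries.C (R := ℝ)) (N.choose k)]
      ring
    rw [this, coeff_C_mul]
  rw [hpull]
  have hsum : (1 + E l) ^ N
      = ∑ k ∈ range (n+N+1), E l ^ k * (N.choose k : PowerSeries ℝ) := by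
    have h1 : (1 + E l)^N = ∑ k ∈ range (N+1), E l ^ k * (N.choose k : PowerSeries ℝ) := by
      rw [add_comm (1 : PowerSeries ℝ) (E l), add_pow]
      exact Finset.sum_congr rfl fun k _ => by rw [one_pow, mul_one]
    rw [h1]
    refine Finset.sum_subset (range_subset_range.mpr (by omega)) fun k hk hk' => ?_
    rw [Nat.choose_eq_zero_of_lt (by simp at hk'; omega)]
    simp
  rw [← hsum, one_add_E]
  have hpow : (rescale l (exp ℝ)) ^ N = rescale ((N : ℝ) * l) (exp ℝ) := by
    rw [← map_pow, exp_pow_eq_rescale_exp, rescale_rescale]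
  rw [hpow, exp_mul_exp_eq_exp_add, coeff_rescale, coeff_exp]
  have : ((algebraMap ℚ ℝ) (1 / n.factorial) : ℝ) = 1 / (n.factorial : ℝ) := by
    push_cast
    simp
  rw [this, add_comm ρ]
  ring

lemma expansion (l ρ : ℝ) (hl : l ≠ 0) (n : ℕ) (x : ℝ) :
    (x + ρ) ^ n = ∑ k ∈ range (n+1), sig l ρ n k * ffact l x k := by
  set q : Polynomial ℝ := (Polynomial.X + Polynomial.C ρ)^n
      - ∑ k ∈ range (n+1), Polynomial.C (sig l ρ n k) * ffp l k with hq
  have hroot : ∀ N : ℕ, q.IsRoot ((N : ℝ) * l) := by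
    intro N
    have hterm : ∀ k, sig l ρ n k * (l ^ k * (N.descFactorial k : ℝ))
        = (n.factorial : ℝ) * ((N.choose k : ℝ) * coeff n (rescale ρ (exp ℝ) * E l ^ k)) := by
      intro k
      rw [sig, Nat.descFactorial_eq_factorial_mul_choose]
      push_cast
      have hk : (k.factorial : ℝ) ≠ 0 := by positivity
      have hlk : (l : ℝ) ^ k ≠ 0 := pow_ne_zero _ hl
      field_simp
    have : q.eval ((N : ℝ) * l)
        = ((N : ℝ) * l + ρ) ^ n - ∑ k ∈ range (n+1), sig l ρ n k * (l ^ k * (N.descFactorial k : ℝ)) := by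
      simp [hq, Polynomial.eval_finset_sum, eval_ffp, ffact_nat_mul]
    rw [Polynomial.IsRoot, this]
    rw [Finset.sum_congr rfl fun k _ => hterm k, ← Finset.mul_sum, coeff_sum_choose]
    have : (n.factorial : ℝ) ≠ 0 := by positivity
    field_simp
    ring
  have hq0 : q = 0 := by
    refine Polynomial.eq_zero_of_infinite_isRoot q ?_
    refine Set.infinite_of_injective_forall_mem (f := fun N : ℕ => (N : ℝ) * l) ?_ hroot
    intro a b hab
    simp only at hab
    have := mul_right_cancel₀ hl hab
    exact_mod_cast this
  have := congrArg (Polynomial.eval x) hq0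
  simp [hq, Polynomial.eval_finset_sum, eval_ffp, sub_eq_zero] at this
  exact this

lemma determine (l ρ : ℝ) (hl : l ≠ 0) (T : ℕ → ℕ → ℝ)
    (hT : ∀ (n : ℕ) (x : ℝ), (x + ρ) ^ n = ∑ k ∈ range (n+1), T n k * ffact l x k) :
    ∀ n k, k ≤ n → T n k = sig l ρ n k := by
  intro n k hk
  have h := uniq l hl n (fun k => T n k - sig l ρ n k) (fun x => by
    simp only [sub_mul, Finset.sum_sub_distrib, ← hT n x, ← expansion l ρ hl n x, sub_self])
  have h2 := h k hk
  change T n k - sig l ρ n k = 0 at h2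
  linarith


section
variable (l : ℝ) (hl : l ≠ 0) (r : ℕ) (m : ℕ) (B : ℕ → ℝ → ℝ)
    (hB : ∀ x : ℝ,
      (PowerSeries.mk fun j => (1 : ℝ) / (j + 1).factorial) ^ m *
        PowerSeries.mk (fun j => B j x / j.factorial) =
      PowerSeries.mk fun j => x ^ j / j.factorial)

noncomputable def Rl (l : ℝ) (r : ℕ) (B : ℕ → ℝ → ℝ) : PowerSeries ℝ :=
  rescale l (PowerSeries.mk fun j => B j ((r : ℝ) / l) / j.factorial)

include hl hB in
lemma keyA : W l ^ m * Rl l r B = rescale (r : ℝ) (exp ℝ) := by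
  have h := congrArg (rescale l) (hB ((r : ℝ) / l))
  rw [map_mul, map_pow] at h
  have h2 : rescale l (PowerSeries.mk fun j => ((r : ℝ) / l) ^ j / j.factorial)
      = rescale (r : ℝ) (exp ℝ) := by
    ext j
    rw [coeff_rescale, coeff_rescale, coeff_mk, coeff_exp]
    have : ((algebraMap ℚ ℝ) (1 / j.factorial) : ℝ) = 1 / (j.factorial : ℝ) := by
      push_cast; simp
    rw [this]
    field_simp
    rw [div_pow]
    field_simp
  rw [h2] at h
  exact h

include hl hB in
lemma keyB (k n : ℕ) (hkn : k ≤ n) :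
    l ^ m * coeff n (rescale (r : ℝ) (exp ℝ) * E l ^ k)
      = ∑ j ∈ Icc k n, coeff (j+m) (E l ^ (k+m))
          * (l ^ (n-j) * (B (n-j) ((r : ℝ) / l) / (n-j).factorial)) := by
  have hEm : E l ^ m = PowerSeries.C (l^m) * (PowerSeries.X ^ m * W l ^ m) := by
    rw [E, mul_pow, mul_pow, map_pow]
  have hser : E l ^ (k+m) * Rl l r B
      = PowerSeries.C (l^m) * (PowerSeries.X ^ m * (rescale (r : ℝ) (exp ℝ) * E l ^ k)) := by
    calc E l ^ (k+m) * Rl l r B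
        = E l ^ k * (PowerSeries.C (l^m) * (PowerSeries.X ^ m * (W l ^ m * Rl l r B))) := by
          rw [pow_add, hEm]; ring
      _ = E l ^ k * (PowerSeries.C (l^m) * (PowerSeries.X ^ m * rescale (r : ℝ) (exp ℝ))) := by
          rw [keyA l hl r m B hB]
      _ = PowerSeries.C (l^m) * (PowerSeries.X ^ m * (rescale (r : ℝ) (exp ℝ) * E l ^ k)) := by
          ring
  have hco := congrArg (coeff (n+m)) hser
  rw [coeff_C_mul, coeff_X_pow_mul' _ m (n+m), if_pos (by omega)] at hco
  simp only [Nat.add_sub_cancel] at hco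
  rw [coeff_mul, Finset.Nat.sum_antidiagonal_eq_sum_range_succ_mk] at hco
  rw [← hco]
  have hstep : ∑ p ∈ range (n+m+1), coeff p (E l ^ (k+m)) * coeff (n+m-p) (Rl l r B)
      = ∑ p ∈ Icc (k+m) (n+m), coeff p (E l ^ (k+m)) * coeff (n+m-p) (Rl l r B) := by
    symm
    refine Finset.sum_subset (fun p hp => by simp at hp ⊢; omega) fun p hp hp' => ?_
    rw [coeff_E_pow_eq_zero l (by simp at hp hp'; omega), zero_mul]
  rw [hstep]
  rw [← Finset.map_add_right_Icc k n m, Finset.sum_map]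
  refine Finset.sum_congr rfl fun j hj => ?_
  simp only [addRightEmbedding_apply]
  rw [show n + m - (j + m) = n - j by omega, Rl, coeff_rescale, coeff_mk]

end

lemma sig_zero (l : ℝ) (a b : ℕ) :
    sig l 0 a b = (a.factorial : ℝ) * coeff a (E l ^ b) / (l ^ b * b.factorial) := by
  have : rescale (0 : ℝ) (exp ℝ) = 1 := by
    rw [rescale_zero]
    simp
  rw [sig, this, one_mul]

lemma choose_cast (a b : ℕ) :
    ((a + b).choose a : ℝ) = ((a+b).factorial : ℝ) / (a.factorial * b.factorial) := by
  rw [eq_div_iff (by positivity)]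
  rw [← mul_assoc]
  exact_mod_cast congrArg (Nat.cast (R := ℝ))
    (by simpa using Nat.choose_mul_factorial_mul_factorial (Nat.le_add_right a b))

end Stmt6Aux

open Stmt6Aux in
/-- Theorem 7: identity connecting λ-analogues of r-Stirling numbers of the second kind,
λ-analogues of Stirling numbers of the second kind, and values of higher-order Bernoulli
polynomials.  The order-m Bernoulli polynomials `B m j x` are characterized by the formal
power series identity `((e^t - 1)/t)^m · ∑_j B^{(m)}_j(x) t^j/j! = e^{xt}`. -/
theorem stmt6 (l : ℝ) (hl : l ≠ 0) (r : ℕ) (m : ℕ) (hm : 0 < m)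
    (S Sr : ℕ → ℕ → ℝ) (B : ℕ → ℝ → ℝ)
    (hS : ∀ (n : ℕ) (x : ℝ), x ^ n = ∑ k ∈ range (n + 1), S n k * ffact l x k)
    (hSr : ∀ (n : ℕ) (x : ℝ), (x + r) ^ n = ∑ k ∈ range (n + 1), Sr n k * ffact l x k)
    (hB : ∀ x : ℝ,
      (PowerSeries.mk fun j => (1 : ℝ) / (j + 1).factorial) ^ m *
        PowerSeries.mk (fun j => B j x / j.factorial) =
      PowerSeries.mk fun j => x ^ j / j.factorial)
    (n k : ℕ) (hkn : k ≤ n) :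
    Sr n k / ((k + m).choose k : ℝ) =
      ∑ j ∈ Icc k n, ((n.choose j : ℝ) / ((j + m).choose j : ℝ)) *
        S (j + m) (k + m) * B (n - j) (r / l) * l ^ (n - j) := by
  have hSr' : Sr n k = sig l r n k := determine l r hl Sr hSr n k hkn
  have hS' : ∀ a b, b ≤ a → S a b = sig l 0 a b :=
    determine l 0 hl S (fun a x => by simpa using hS a x)
  rw [hSr']
  have hR : ∑ j ∈ Icc k n, ((n.choose j : ℝ) / ((j + m).choose j : ℝ)) *
        S (j + m) (k + m) * B (n - j) (r / l) * l ^ (n - j)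
      = ∑ j ∈ Icc k n, ((n.choose j : ℝ) / ((j + m).choose j : ℝ)) *
        sig l 0 (j + m) (k + m) * B (n - j) (r / l) * l ^ (n - j) := by
    refine Finset.sum_congr rfl fun j hj => ?_
    rw [hS' (j+m) (k+m) (by simp at hj; omega)]
  rw [hR]
  set c : ℝ := (n.factorial * m.factorial : ℝ) / ((k+m).factorial * l ^ (k+m)) with hc
  have hkm : (k.factorial : ℝ) ≠ 0 := by positivity
  have hmm : (m.factorial : ℝ) ≠ 0 := by positivity
  have hkmf : ((k+m).factorial : ℝ) ≠ 0 := by positivity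
  have hnf : (n.factorial : ℝ) ≠ 0 := by positivity
  calc sig l (r : ℝ) n k / ((k + m).choose k : ℝ)
      = c * (l ^ m * coeff n (rescale (r : ℝ) (exp ℝ) * E l ^ k)) := by
        rw [sig, choose_cast k m, hc]
        field_simp
        ring
    _ = c * ∑ j ∈ Icc k n, coeff (j+m) (E l ^ (k+m))
          * (l ^ (n-j) * (B (n-j) ((r : ℝ) / l) / (n-j).factorial)) := by
        rw [keyB l hl r m B hB k n hkn]
    _ = ∑ j ∈ Icc k n, ((n.choose j : ℝ) / ((j + m).choose j : ℝ)) *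
        sig l 0 (j + m) (k + m) * B (n - j) (r / l) * l ^ (n - j) := by
        rw [Finset.mul_sum]
        refine Finset.sum_congr rfl fun j hj => ?_
        have hjk : k ≤ j := by simp at hj; omega
        have hjn : j ≤ n := by simp at hj; omega
        have hcn : (n.choose j : ℝ) = (n.factorial : ℝ) / (j.factorial * (n-j).factorial) := by
          have := choose_cast j (n - j)
          rw [Nat.add_sub_cancel' hjn] at this
          rw [this]
        have hjf : (j.factorial : ℝ) ≠ 0 := by positivity
        have hnjf : ((n-j).factorial : ℝ) ≠ 0 := by positivity
        have hjmf : ((j+m).factorial : ℝ) ≠ 0 := by positivity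
        rw [sig_zero, hcn, choose_cast j m, hc]
        field_simp
end

section
/- For nonnegative integers k and positive integer m, as formal power series in t, (1/k!)(1/λ^k)((e^{λmt}−1)/m)^k e^t = Σ_{n≥k} W_{m,λ}(n,k) t^n/n!, where W_{m,λ}(n,k) are the λ-analogues of the Whitney-type Stirling numbers of the second kind. -/
open Finset PowerSeries

lemma key_choose {i j k : ℕ} (hij : i ≤ j) (hjk : j ≤ k) :
    k.choose j * j.descFactorial i = k.descFactorial i * (k - i).choose (j - i) := by
  apply Nat.eq_of_mul_eq_mul_right (Nat.mul_pos (j - i).factorial_pos (k - j).factorial_pos)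
  have h1 : k.choose j * j.descFactorial i * ((j - i).factorial * (k - j).factorial)
      = k.choose j * ((j - i).factorial * j.descFactorial i) * (k - j).factorial := by ring
  have h2 : k.descFactorial i * (k - i).choose (j - i) * ((j - i).factorial * (k - j).factorial)
      = ((k - i).choose (j - i) * (j - i).factorial * ((k - i) - (j - i)).factorial) * k.descFactorial i := by
    rw [show k - j = (k - i) - (j - i) from by omega]; ring
  rw [h1, Nat.factorial_mul_descFactorial hij, Nat.choose_mul_factorial_mul_factorial hjk,
    h2, Nat.choose_mul_factorial_mul_factorial (by omega)]
  exact (Nat.factorial_mul_descFactorial (le_trans hij hjk)).symm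

lemma ffact_eq (l : ℝ) (j i : ℕ) : ffact l ((j : ℝ) * l) i = l ^ i * (j.descFactorial i : ℝ) := by
  induction i with
  | zero => simp [ffact]
  | succ i ih =>
    rw [ffact, ih, Nat.descFactorial_succ]
    rcases le_or_gt i j with h | h
    · push_cast [Nat.cast_sub h]
      ring
    · rw [Nat.descFactorial_eq_zero_iff_lt.2 h]
      push_cast
      ring

lemma innerAltSum (k i : ℕ) :
    ∑ j ∈ range (k + 1), (-1 : ℝ) ^ (k - j) * (k.choose j) * (j.descFactorial i)
      = if i = k then (k.factorial : ℝ) else 0 := by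
  rcases lt_or_ge k i with h | h
  · rw [if_neg (by omega)]
    refine Finset.sum_eq_zero fun j hj => ?_
    simp only [mem_range] at hj
    rw [Nat.descFactorial_eq_zero_iff_lt.2 (by omega), Nat.cast_zero, mul_zero]
  · have hsub : ∑ j ∈ range (k + 1), (-1 : ℝ) ^ (k - j) * (k.choose j) * (j.descFactorial i)
        = ∑ j ∈ Ico i (k + 1), (-1 : ℝ) ^ (k - j) * (k.choose j) * (j.descFactorial i) := by
      refine (Finset.sum_subset (fun x hx => ?_) (fun j hj hj' => ?_)).symm
      · simp only [mem_Ico, mem_range] at hx ⊢; omega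
      · simp only [mem_Ico, mem_range] at hj hj'
        rw [Nat.descFactorial_eq_zero_iff_lt.2 (by omega), Nat.cast_zero, mul_zero]
    rw [hsub, Finset.sum_Ico_eq_sum_range, show k + 1 - i = (k - i) + 1 from by omega]
    have hterm : ∀ s ∈ range ((k - i) + 1),
        (-1 : ℝ) ^ (k - (i + s)) * (k.choose (i + s)) * ((i + s).descFactorial i)
          = (k.descFactorial i : ℝ) * ((-1) ^ ((k - i) - s) * ((k - i).choose s)) := by
      intro s hs
      simp only [mem_range] at hs
      have hk : i + s ≤ k := by omega
      have := key_choose (Nat.le_add_right i s) hk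
      rw [show (i + s) - i = s from by omega] at this
      have hcast : (k.choose (i + s) : ℝ) * ((i + s).descFactorial i)
          = (k.descFactorial i : ℝ) * ((k - i).choose s) := by exact_mod_cast congrArg (Nat.cast : ℕ → ℝ) this
      rw [show k - (i + s) = (k - i) - s from by omega, mul_assoc, hcast]
      ring
    rw [Finset.sum_congr rfl hterm, ← Finset.mul_sum]
    have hbin : ∑ s ∈ range ((k - i) + 1), (-1 : ℝ) ^ ((k - i) - s) * ((k - i).choose s)
        = (0 : ℝ) ^ (k - i) := by
      have := add_pow (1 : ℝ) (-1) (k - i)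
      simp only [one_pow, one_mul, mul_comm] at this
      rw [show (0 : ℝ) = 1 + -1 from by ring, this]
      exact Finset.sum_congr rfl fun s _ => by ring
    rw [hbin]
    rcases eq_or_lt_of_le h with rfl | h'
    · simp [Nat.descFactorial_self]
    · rw [if_neg (by omega), zero_pow (by omega), mul_zero]

/-- Theorem 8: generating function of the λ-analogues of the Whitney-type Stirling numbers
of the second kind: `(1/k!)(1/λᵏ)((e^{λmt}-1)/m)ᵏ e^t = ∑_{n ≥ k} W_{m,λ}(n,k) tⁿ/n!`. -/
theorem stmt7 (l : ℝ) (hl : l ≠ 0) (m : ℕ) (hm : 0 < m) (W : ℕ → ℕ → ℝ)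
    (hW : ∀ (n : ℕ) (x : ℝ),
      ((m : ℝ) * x + 1) ^ n = ∑ k ∈ range (n + 1), W n k * (m : ℝ) ^ k * ffact l x k)
    (k : ℕ) :
    PowerSeries.C (R := ℝ) ((1 / k.factorial) * (1 / l ^ k)) *
        (PowerSeries.C (R := ℝ) (1 / (m : ℝ)) * (rescale (l * m) (PowerSeries.exp ℝ) - 1)) ^ k *
        PowerSeries.exp ℝ =
      PowerSeries.mk (fun n => if k ≤ n then W n k / n.factorial else 0) := by
  -- the key numerical identity
  have keyN : ∀ n : ℕ,
      ∑ j ∈ range (k + 1), (-1 : ℝ) ^ (k - j) * (k.choose j) * ((j : ℝ) * (l * m) + 1) ^ n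
        = if k ≤ n then (k.factorial : ℝ) * l ^ k * m ^ k * W n k else 0 := by
    intro n
    have h1 : ∀ j : ℕ, ((j : ℝ) * (l * m) + 1) ^ n
        = ∑ i ∈ range (n + 1), W n i * (m : ℝ) ^ i * (l ^ i * (j.descFactorial i : ℝ)) := by
      intro j
      have := hW n ((j : ℝ) * l)
      rw [show (m : ℝ) * ((j : ℝ) * l) + 1 = (j : ℝ) * (l * m) + 1 from by ring] at this
      rw [this]
      exact Finset.sum_congr rfl fun i _ => by rw [ffact_eq]
    have step : ∀ j : ℕ, (-1 : ℝ) ^ (k - j) * (k.choose j) * ((j : ℝ) * (l * m) + 1) ^ n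
        = ∑ i ∈ range (n + 1), W n i * (m : ℝ) ^ i * l ^ i *
            ((-1 : ℝ) ^ (k - j) * (k.choose j) * (j.descFactorial i)) := by
      intro j
      rw [h1 j, Finset.mul_sum]
      exact Finset.sum_congr rfl fun i _ => by ring
    calc ∑ j ∈ range (k + 1), (-1 : ℝ) ^ (k - j) * (k.choose j) * ((j : ℝ) * (l * m) + 1) ^ n
        = ∑ i ∈ range (n + 1), W n i * (m : ℝ) ^ i * l ^ i *
            (∑ j ∈ range (k + 1), (-1 : ℝ) ^ (k - j) * (k.choose j) * (j.descFactorial i)) := by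
          rw [Finset.sum_congr rfl (fun j _ => step j), Finset.sum_comm]
          exact Finset.sum_congr rfl fun i _ => by rw [← Finset.mul_sum]
      _ = ∑ i ∈ range (n + 1),
            (if i = k then W n i * (m : ℝ) ^ i * l ^ i * k.factorial else 0) := by
          refine Finset.sum_congr rfl fun i _ => ?_
          rw [innerAltSum]
          split_ifs <;> ring
      _ = if k ≤ n then (k.factorial : ℝ) * l ^ k * m ^ k * W n k else 0 := by
          rw [Finset.sum_ite_eq' (range (n + 1)) k
            (fun i => W n i * (m : ℝ) ^ i * l ^ i * k.factorial)]
          simp only [mem_range]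
          rcases Nat.lt_or_ge k (n + 1) with h' | h'
          · rw [if_pos h', if_pos (by omega)]; ring
          · rw [if_neg (by omega), if_neg (by omega)]
  -- powers of rescaled exp
  have hpow : ∀ j : ℕ, (rescale (l * m) (PowerSeries.exp ℝ)) ^ j
      = rescale ((j : ℝ) * (l * m)) (PowerSeries.exp ℝ) := by
    intro j
    induction j with
    | zero => simp [rescale_zero]
    | succ j ih =>
      rw [pow_succ, ih, PowerSeries.exp_mul_exp_eq_exp_add]
      push_cast
      ring_nf
  have hL : (rescale (l * m) (PowerSeries.exp ℝ) - 1) ^ k * PowerSeries.exp ℝ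
      = ∑ j ∈ range (k + 1), PowerSeries.C (R := ℝ) ((-1 : ℝ) ^ (k - j) * (k.choose j)) *
          rescale ((j : ℝ) * (l * m) + 1) (PowerSeries.exp ℝ) := by
    rw [sub_eq_add_neg, add_pow, Finset.sum_mul]
    refine Finset.sum_congr rfl fun j hj => ?_
    have hre : rescale ((j : ℝ) * (l * m)) (PowerSeries.exp ℝ) * PowerSeries.exp ℝ
        = rescale ((j : ℝ) * (l * m) + 1) (PowerSeries.exp ℝ) := by
      have h := PowerSeries.exp_mul_exp_eq_exp_add ((j : ℝ) * (l * m)) (1 : ℝ)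
      rwa [rescale_one, RingHom.id_apply] at h
    have hC : ((-1 : ℝ⟦X⟧) ^ (k - j) * ((k.choose j : ℕ) : ℝ⟦X⟧))
        = PowerSeries.C (R := ℝ) ((-1 : ℝ) ^ (k - j) * (k.choose j)) := by
      rw [map_mul, map_pow, map_neg, map_one, map_natCast]
    rw [hpow j, ← hre, ← hC]
    ring
  have hCk : (PowerSeries.C (R := ℝ) (1 / (m : ℝ)) * (rescale (l * m) (PowerSeries.exp ℝ) - 1)) ^ k
      = PowerSeries.C (R := ℝ) ((1 / (m : ℝ)) ^ k) * (rescale (l * m) (PowerSeries.exp ℝ) - 1) ^ k := by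
    rw [mul_pow, ← map_pow]
  rw [mul_assoc, hCk, mul_assoc, hL, Finset.mul_sum]
  ext n
  rw [PowerSeries.coeff_mk, coeff_C_mul, map_sum]
  simp only [coeff_C_mul, coeff_rescale, PowerSeries.coeff_exp]
  have hfac : (algebraMap ℚ ℝ) (1 / n.factorial) = 1 / (n.factorial : ℝ) := by
    rw [map_div₀, map_one, map_natCast]
  simp only [hfac]
  have hsum : ∑ x ∈ range (k + 1),
        ((1 : ℝ) / m) ^ k * ((-1) ^ (k - x) * (k.choose x) * (((x : ℝ) * (l * m) + 1) ^ n * (1 / n.factorial)))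
      = ((1 : ℝ) / m) ^ k * (1 / n.factorial) *
          ∑ j ∈ range (k + 1), (-1 : ℝ) ^ (k - j) * (k.choose j) * ((j : ℝ) * (l * m) + 1) ^ n := by
    rw [Finset.mul_sum]
    exact Finset.sum_congr rfl fun i _ => by ring
  rw [hsum, keyN n]
  have hkne : (k.factorial : ℝ) ≠ 0 := Nat.cast_ne_zero.2 k.factorial_ne_zero
  have hmne : (m : ℝ) ≠ 0 := Nat.cast_ne_zero.2 hm.ne'
  split_ifs with h
  · field_simp
    rw [← mul_pow, one_div_mul_cancel hmne, one_pow, one_mul]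
  · simp
end

section
/- For a positive integer m and nonzero real λ, as formal power series in t, e^t · exp(x(e^{λmt}−1)/(λm)) = Σ_{n≥0} d_{m,λ}(n,x) t^n/n!, where d_{m,λ}(n,x) = Σ_{k=0}^n W_{m,λ}(n,k) x^k is the λ-analogue of the Dowling polynomial. -/
open Finset PowerSeries

/-- Alternating binomial sum as a power of a difference. -/
lemma binom_diff (z : ℝ) (k : ℕ) :
    ∑ j ∈ range (k + 1), (-1 : ℝ) ^ (k - j) * (k.choose j : ℝ) * z ^ j = (z - 1) ^ k := by
  rw [sub_pow]
  refine Finset.sum_congr rfl fun j hj => ?_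
  rw [Finset.mem_range] at hj
  have h : (-1 : ℝ) ^ (k - j) = (-1) ^ (j + k) := by
    rw [show j + k = (k - j) + 2 * j by omega, pow_add]
    simp [pow_mul]
  rw [h]; ring

/-- Binomial inversion. -/
lemma binom_invert (e b : ℕ → ℝ)
    (h : ∀ j, e j = ∑ k ∈ range (j + 1), (j.choose k : ℝ) * b k) (k : ℕ) :
    b k = ∑ j ∈ range (k + 1), (-1 : ℝ) ^ (k - j) * (k.choose j : ℝ) * e j := by
  have key : ∑ j ∈ range (k + 1), (-1 : ℝ) ^ (k - j) * (k.choose j : ℝ) * e j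
      = ∑ i ∈ range (k + 1), ∑ j ∈ Finset.Ico i (k + 1),
          (-1 : ℝ) ^ (k - j) * (k.choose j : ℝ) * ((j.choose i : ℝ) * b i) := by
    have := Finset.sum_Ico_Ico_comm 0 (k + 1)
      (fun i j => (-1 : ℝ) ^ (k - j) * (k.choose j : ℝ) * ((j.choose i : ℝ) * b i))
    simp only [Finset.range_eq_Ico] at *
    rw [this]
    refine Finset.sum_congr rfl fun j hj => ?_
    rw [h j, Finset.mul_sum]
  rw [key]
  have inner : ∀ i ∈ range (k + 1), ∑ j ∈ Finset.Ico i (k + 1),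
      (-1 : ℝ) ^ (k - j) * (k.choose j : ℝ) * ((j.choose i : ℝ) * b i)
      = (if i = k then b k else 0) := by
    intro i hi
    rw [Finset.mem_range] at hi
    have hik : i ≤ k := Nat.lt_succ_iff.mp hi
    have step : ∀ j ∈ Finset.Ico i (k + 1),
        (-1 : ℝ) ^ (k - j) * (k.choose j : ℝ) * ((j.choose i : ℝ) * b i)
        = (k.choose i : ℝ) * b i * ((-1 : ℝ) ^ ((k - i) - (j - i)) * ((k - i).choose (j - i) : ℝ) * 1 ^ (j - i)) := by
      intro j hj
      rw [Finset.mem_Ico] at hj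
      obtain ⟨hij, hjk⟩ := hj
      have hjk' : j ≤ k := Nat.lt_succ_iff.mp hjk
      have hcm : (k.choose j) * (j.choose i) = (k.choose i) * ((k - i).choose (j - i)) :=
        Nat.choose_mul hij
      have hcast : (k.choose j : ℝ) * (j.choose i : ℝ) = (k.choose i : ℝ) * ((k - i).choose (j - i) : ℝ) := by
        exact_mod_cast congrArg (Nat.cast (R := ℝ)) hcm
      have hexp : k - j = (k - i) - (j - i) := by omega
      rw [hexp]
      calc (-1 : ℝ) ^ (k - i - (j - i)) * (k.choose j : ℝ) * ((j.choose i : ℝ) * b i)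
          = ((k.choose j : ℝ) * (j.choose i : ℝ)) * b i * (-1 : ℝ) ^ (k - i - (j - i)) := by ring
        _ = ((k.choose i : ℝ) * ((k - i).choose (j - i) : ℝ)) * b i * (-1 : ℝ) ^ (k - i - (j - i)) := by rw [hcast]
        _ = (k.choose i : ℝ) * b i * ((-1 : ℝ) ^ (k - i - (j - i)) * ((k - i).choose (j - i) : ℝ) * 1 ^ (j - i)) := by ring
    rw [Finset.sum_congr rfl step, ← Finset.mul_sum]
    have hre : ∑ j ∈ Finset.Ico i (k + 1),
        (-1 : ℝ) ^ ((k - i) - (j - i)) * ((k - i).choose (j - i) : ℝ) * 1 ^ (j - i)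
        = ∑ d ∈ range (k - i + 1),
          (-1 : ℝ) ^ ((k - i) - d) * ((k - i).choose d : ℝ) * 1 ^ d := by
      rw [Finset.sum_Ico_eq_sum_range]
      have : k + 1 - i = k - i + 1 := by omega
      rw [this]
      refine Finset.sum_congr rfl fun d _ => ?_
      congr 2 <;> simp [Nat.add_sub_cancel_left]
    rw [hre, binom_diff (1 : ℝ) (k - i), sub_self]
    by_cases hik' : i = k
    · subst hik'; simp
    · have : k - i ≠ 0 := by omega
      rw [zero_pow this, mul_zero, if_neg hik']
  rw [Finset.sum_congr rfl inner, Finset.sum_ite_eq' (range (k + 1)) k (fun _ => b k)]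
  simp

/-- `ffact` at `l * j` is `l ^ k` times a descending factorial. -/
lemma ffact_nat (l : ℝ) (j : ℕ) : ∀ k : ℕ, ffact l (l * j) k = l ^ k * (j.descFactorial k : ℝ)
  | 0 => by simp [ffact]
  | k + 1 => by
    rw [ffact, ffact_nat l j k, Nat.descFactorial_succ]
    by_cases hkj : k ≤ j
    · push_cast [hkj]
      ring
    · have : j.descFactorial k = 0 := Nat.descFactorial_eq_zero_iff_lt.mpr (by omega)
      simp [this]

/-- A finite linear combination of exponential series. -/
lemma hs_exp_sum (s : Finset ℕ) (c r : ℕ → ℝ) (t : ℝ) :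
    HasSum (fun n : ℕ => (∑ j ∈ s, c j * r j ^ n) * t ^ n / n.factorial)
      (∑ j ∈ s, c j * Real.exp (r j * t)) := by
  have base : ∀ j : ℕ, HasSum (fun n : ℕ => c j * ((r j * t) ^ n / n.factorial))
      (c j * Real.exp (r j * t)) := by
    intro j
    refine HasSum.mul_left _ ?_
    rw [Real.exp_eq_exp_ℝ]
    exact NormedSpace.expSeries_div_hasSum_exp (r j * t)
  have heq : (fun n : ℕ => (∑ j ∈ s, c j * r j ^ n) * t ^ n / n.factorial)
      = fun n : ℕ => ∑ j ∈ s, c j * ((r j * t) ^ n / n.factorial) := by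
    funext n
    rw [Finset.sum_mul, Finset.sum_div]
    exact Finset.sum_congr rfl fun j _ => by rw [mul_pow]; ring
  rw [heq]
  exact hasSum_sum fun j _ => base j

/-- Theorem 10: generating function of the λ-analogues of Dowling polynomials:
`e^t · e^{x(e^{λmt}-1)/(λm)} = ∑_{n ≥ 0} d_{m,λ}(n,x) tⁿ/n!`, where
`d_{m,λ}(n,x) = ∑_{k=0}^n W_{m,λ}(n,k) xᵏ`. -/
theorem stmt9 (l : ℝ) (hl : l ≠ 0) (m : ℕ) (hm : 0 < m) (W : ℕ → ℕ → ℝ)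
    (hW : ∀ (n : ℕ) (x : ℝ),
      ((m : ℝ) * x + 1) ^ n = ∑ k ∈ range (n + 1), W n k * (m : ℝ) ^ k * ffact l x k)
    (d : ℕ → ℝ → ℝ)
    (hd : ∀ (n : ℕ) (x : ℝ), d n x = ∑ k ∈ range (n + 1), W n k * x ^ k)
    (x t : ℝ) :
    HasSum (fun n : ℕ => d n x * t ^ n / n.factorial)
      (Real.exp t * Real.exp (x * (Real.exp (l * m * t) - 1) / (l * m))) := by
  have hm' : (m : ℝ) ≠ 0 := Nat.cast_ne_zero.mpr hm.ne'
  set u : ℝ := l * m with hu_def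
  have hu : u ≠ 0 := mul_ne_zero hl hm'
  set b : ℕ → ℕ → ℝ := fun n k =>
    if k ≤ n then W n k * u ^ k * k.factorial else 0 with hb
  set D : ℕ → ℕ → ℝ := fun n k =>
    ∑ j ∈ range (k + 1), (-1 : ℝ) ^ (k - j) * (k.choose j : ℝ) * (u * j + 1) ^ n with hD
  -- Step 1: the values of the polynomial at x = l * j
  have step1 : ∀ n j : ℕ, (u * j + 1) ^ n = ∑ k ∈ range (j + 1), (j.choose k : ℝ) * b n k := by
    intro n j
    have h0 := hW n (l * j)
    have hL : ((m : ℝ) * (l * j) + 1) = u * j + 1 := by rw [hu_def]; ring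
    rw [hL] at h0
    have hterm : ∀ k ∈ range (n + 1), W n k * (m : ℝ) ^ k * ffact l (l * j) k
        = (j.choose k : ℝ) * b n k := by
      intro k hk
      rw [Finset.mem_range] at hk
      rw [ffact_nat, hb]
      simp only [if_pos (Nat.lt_succ_iff.mp hk)]
      rw [Nat.descFactorial_eq_factorial_mul_choose]
      push_cast
      rw [hu_def]
      ring
    rw [h0, Finset.sum_congr rfl hterm]
    have e1 : ∑ k ∈ range (n + 1), (j.choose k : ℝ) * b n k
        = ∑ k ∈ range (n + j + 2), (j.choose k : ℝ) * b n k := by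
      refine Finset.sum_subset (Finset.range_subset_range.mpr (by omega)) fun k _ hk => ?_
      rw [Finset.mem_range] at hk
      have : ¬ k ≤ n := by omega
      simp [hb, this]
    have e2 : ∑ k ∈ range (j + 1), (j.choose k : ℝ) * b n k
        = ∑ k ∈ range (n + j + 2), (j.choose k : ℝ) * b n k := by
      refine Finset.sum_subset (Finset.range_subset_range.mpr (by omega)) fun k _ hk => ?_
      rw [Finset.mem_range] at hk
      have : j < k := by omega
      simp [Nat.choose_eq_zero_of_lt this]
    rw [e1, ← e2]
  -- Step 2: binomial inversion
  have step2 : ∀ n k : ℕ, b n k = D n k := by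
    intro n k
    exact binom_invert (fun j => (u * j + 1) ^ n) (b n) (step1 n) k
  -- The double-indexed family
  set F : ℕ × ℕ → ℝ := fun p =>
    ((x / u) ^ p.1 / p.1.factorial * D p.2 p.1) * t ^ p.2 / p.2.factorial with hF
  set y : ℝ := x * (Real.exp (u * t) - 1) / u with hy
  -- fibers over k
  have fiber : ∀ k : ℕ, HasSum (fun n => F (k, n))
      (Real.exp t * (y ^ k / k.factorial)) := by
    intro k
    have h1 := hs_exp_sum (range (k + 1))
      (fun j => (x / u) ^ k / k.factorial * ((-1 : ℝ) ^ (k - j) * (k.choose j : ℝ)))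
      (fun j => u * j + 1) t
    have heq : (fun n : ℕ => F (k, n)) = fun n : ℕ =>
        (∑ j ∈ range (k + 1),
          (x / u) ^ k / k.factorial * ((-1 : ℝ) ^ (k - j) * (k.choose j : ℝ)) * (u * j + 1) ^ n)
          * t ^ n / n.factorial := by
      funext n
      rw [hF]
      simp only [hD]
      rw [Finset.mul_sum, Finset.sum_mul, Finset.sum_div, Finset.sum_mul, Finset.sum_div]
      exact Finset.sum_congr rfl fun j _ => by ring
    have hval : ∑ j ∈ range (k + 1),
        (x / u) ^ k / k.factorial * ((-1 : ℝ) ^ (k - j) * (k.choose j : ℝ))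
          * Real.exp ((u * j + 1) * t)
        = Real.exp t * (y ^ k / k.factorial) := by
      have hexpj : ∀ j : ℕ, Real.exp ((u * j + 1) * t) = Real.exp (u * t) ^ j * Real.exp t := by
        intro j
        rw [show (u * j + 1) * t = j * (u * t) + t by ring, Real.exp_add, Real.exp_nat_mul]
      have : ∑ j ∈ range (k + 1),
          (x / u) ^ k / k.factorial * ((-1 : ℝ) ^ (k - j) * (k.choose j : ℝ))
            * Real.exp ((u * j + 1) * t)
          = (x / u) ^ k / k.factorial * Real.exp t *
            ∑ j ∈ range (k + 1),
              (-1 : ℝ) ^ (k - j) * (k.choose j : ℝ) * Real.exp (u * t) ^ j := by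
        rw [Finset.mul_sum]
        exact Finset.sum_congr rfl fun j _ => by rw [hexpj j]; ring
      rw [this, binom_diff (Real.exp (u * t)) k, hy,
        show x * (Real.exp (u * t) - 1) / u = x / u * (Real.exp (u * t) - 1) from by ring,
        mul_pow]
      ring
    rw [heq, ← hval]
    exact h1
  -- total over k
  have total : HasSum (fun k : ℕ => Real.exp t * (y ^ k / k.factorial))
      (Real.exp t * Real.exp y) := by
    rw [Real.exp_eq_exp_ℝ]
    exact (NormedSpace.expSeries_div_hasSum_exp y).mul_left _
  -- the dominating family
  set G : ℕ × ℕ → ℝ := fun p =>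
    (∑ j ∈ range (p.1 + 1),
      |x / u| ^ p.1 / p.1.factorial * (p.1.choose j : ℝ) * (|u| * j + 1) ^ p.2)
      * |t| ^ p.2 / p.2.factorial with hG
  set z : ℝ := |x / u| * (Real.exp (|u| * |t|) + 1) with hz
  have fiberG : ∀ k : ℕ, HasSum (fun n => G (k, n))
      (Real.exp |t| * (z ^ k / k.factorial)) := by
    intro k
    have h1 := hs_exp_sum (range (k + 1))
      (fun j => |x / u| ^ k / k.factorial * (k.choose j : ℝ))
      (fun j => |u| * j + 1) |t|
    have hval : ∑ j ∈ range (k + 1),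
        |x / u| ^ k / k.factorial * (k.choose j : ℝ) * Real.exp ((|u| * j + 1) * |t|)
        = Real.exp |t| * (z ^ k / k.factorial) := by
      have hexpj : ∀ j : ℕ,
          Real.exp ((|u| * j + 1) * |t|) = Real.exp (|u| * |t|) ^ j * Real.exp |t| := by
        intro j
        rw [show (|u| * j + 1) * |t| = j * (|u| * |t|) + |t| by ring, Real.exp_add,
          Real.exp_nat_mul]
      have h2 : ∑ j ∈ range (k + 1),
          |x / u| ^ k / k.factorial * (k.choose j : ℝ) * Real.exp ((|u| * j + 1) * |t|)
          = |x / u| ^ k / k.factorial * Real.exp |t| *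
            ∑ j ∈ range (k + 1),
              Real.exp (|u| * |t|) ^ j * 1 ^ (k - j) * (k.choose j : ℝ) := by
        rw [Finset.mul_sum]
        exact Finset.sum_congr rfl fun j _ => by rw [hexpj j]; ring
      rw [h2, ← add_pow (Real.exp (|u| * |t|)) 1 k, hz, mul_pow]
      ring
    rw [← hval]
    exact h1
  have hGnonneg : ∀ p : ℕ × ℕ, 0 ≤ G p := by
    intro p
    rw [hG]
    apply div_nonneg _ (by positivity)
    apply mul_nonneg _ (by positivity)
    refine Finset.sum_nonneg fun j _ => ?_
    positivity
  have sumGfibers : Summable (fun k : ℕ => Real.exp |t| * (z ^ k / k.factorial)) := by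
    rw [Real.exp_eq_exp_ℝ]
    exact ((NormedSpace.expSeries_div_hasSum_exp z).mul_left _).summable
  have hGsummable : Summable G := by
    rw [summable_prod_of_nonneg hGnonneg]
    constructor
    · exact fun k => (fiberG k).summable
    · have : (fun k : ℕ => ∑' n, G (k, n))
          = fun k : ℕ => Real.exp |t| * (z ^ k / k.factorial) := by
        funext k
        exact (fiberG k).tsum_eq
      rw [this]
      exact sumGfibers
  -- comparison
  have hFle : ∀ p : ℕ × ℕ, ‖F p‖ ≤ G p := by
    rintro ⟨k, n⟩
    rw [Real.norm_eq_abs, hF, hG]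
    simp only
    simp only [abs_mul, abs_div, abs_pow, Nat.abs_cast]
    have hDle : |D n k| ≤ ∑ j ∈ range (k + 1), (k.choose j : ℝ) * (|u| * j + 1) ^ n := by
      rw [hD]
      refine (Finset.abs_sum_le_sum_abs _ _).trans (Finset.sum_le_sum fun j _ => ?_)
      rw [abs_mul, abs_mul, abs_pow, abs_neg, abs_one, one_pow, one_mul, Nat.abs_cast, abs_pow]
      refine mul_le_mul_of_nonneg_left (pow_le_pow_left₀ (abs_nonneg _) ?_ n) (by positivity)
      calc |u * j + 1| ≤ |u * j| + |(1 : ℝ)| := abs_add_le _ _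
        _ = |u| * j + 1 := by rw [abs_mul, Nat.abs_cast, abs_one]
    have hsum : ∑ j ∈ range (k + 1),
        (|x| / |u|) ^ k / k.factorial * (k.choose j : ℝ) * (|u| * j + 1) ^ n
        = (|x| / |u|) ^ k / k.factorial *
          ∑ j ∈ range (k + 1), (k.choose j : ℝ) * (|u| * j + 1) ^ n := by
      rw [Finset.mul_sum]
      exact Finset.sum_congr rfl fun j _ => by ring
    rw [hsum]
    gcongr <;> first
      | positivity
      | exact hDle
      | exact (abs_nonneg _).trans hDle
  have hFsummable : Summable F := Summable.of_norm_bounded hGsummable hFle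
  -- total sum of F
  have hFtotal : HasSum F (Real.exp t * Real.exp y) := by
    have h1 : HasSum (fun k : ℕ => Real.exp t * (y ^ k / k.factorial)) (∑' p, F p) :=
      HasSum.prod_fiberwise hFsummable.hasSum fiber
    have := h1.unique total
    rw [← this]
    exact hFsummable.hasSum
  -- swap coordinates
  have hswap : HasSum (fun p : ℕ × ℕ => F (p.2, p.1)) (Real.exp t * Real.exp y) :=
    (Equiv.prodComm ℕ ℕ).hasSum_iff.mpr hFtotal
  -- fibers over n
  have fiberN : ∀ n : ℕ, HasSum (fun k => F (k, n)) (d n x * t ^ n / n.factorial) := by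
    intro n
    have hzero : ∀ k ∉ range (n + 1), F (k, n) = 0 := by
      intro k hk
      rw [Finset.mem_range] at hk
      have hkn : ¬ k ≤ n := by omega
      rw [hF]
      simp only
      rw [← step2, hb]
      simp [hkn]
    have h1 : HasSum (fun k => F (k, n)) (∑ k ∈ range (n + 1), F (k, n)) :=
      hasSum_sum_of_ne_finset_zero hzero
    have h2 : ∑ k ∈ range (n + 1), F (k, n) = d n x * t ^ n / n.factorial := by
      rw [hd]
      rw [Finset.sum_mul, Finset.sum_div]
      refine Finset.sum_congr rfl fun k hk => ?_
      rw [Finset.mem_range] at hk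
      have hkn : k ≤ n := Nat.lt_succ_iff.mp hk
      rw [hF]
      simp only
      rw [← step2, hb]
      simp only [if_pos hkn]
      have hk1 : (x / u) ^ k * u ^ k = x ^ k := by
        rw [div_pow, div_mul_cancel₀]
        exact pow_ne_zero k hu
      have hk2 : (k.factorial : ℝ) ≠ 0 := Nat.cast_ne_zero.mpr k.factorial_ne_zero
      rw [← hk1]
      field_simp
    rw [← h2]
    exact h1
  exact HasSum.prod_fiberwise hswap fiberN
end

section
/- (Dobinski-like formula) For every nonnegative integer n, positive integer m, nonzero real λ > 0 and real x, the λ-analogue of the Dowling polynomial satisfies d_{m,λ}(n,x) = e^{−x/(λm)} Σ_{k=0}^∞ [x^k / (k! m^k λ^k)] (λmk + 1)^n, where the series converges absolutely. -/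
open Finset PowerSeries

lemma ffact_cast (l : ℝ) (k : ℕ) : ∀ j : ℕ, ffact l (l * k) j = l ^ j * (k.descFactorial j : ℝ)
  | 0 => by simp [ffact]
  | j + 1 => by
    rw [ffact, ffact_cast l k j, Nat.descFactorial_succ]
    rcases le_or_gt (j + 1) k with h | h
    · push_cast [Nat.cast_sub (by omega : j ≤ k)]
      ring
    · rcases Nat.lt_or_ge k j with h2 | h2
      · rw [Nat.descFactorial_eq_zero_iff_lt.2 h2]; simp
      · have hk : k = j := by omega
        subst hk; simp [mul_comm]

/-- Theorem 11 (Dobinski-like formula):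
`d_{m,λ}(n,x) = e^{-x/(λm)} ∑_{k=0}^∞ xᵏ/(k! mᵏ λᵏ) (λmk+1)ⁿ`, the series converging
absolutely. -/
theorem stmt10 (l : ℝ) (hl : 0 < l) (m : ℕ) (hm : 0 < m) (W : ℕ → ℕ → ℝ)
    (hW : ∀ (n : ℕ) (x : ℝ),
      ((m : ℝ) * x + 1) ^ n = ∑ k ∈ range (n + 1), W n k * (m : ℝ) ^ k * ffact l x k)
    (d : ℕ → ℝ → ℝ)
    (hd : ∀ (n : ℕ) (x : ℝ), d n x = ∑ k ∈ range (n + 1), W n k * x ^ k)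
    (n : ℕ) (x : ℝ) :
    Summable (fun k : ℕ =>
      |x ^ k / (k.factorial * (m : ℝ) ^ k * l ^ k) * (l * m * k + 1) ^ n|) ∧
    d n x = Real.exp (-(x / (l * m))) *
      ∑' k : ℕ, x ^ k / (k.factorial * (m : ℝ) ^ k * l ^ k) * (l * m * k + 1) ^ n := by
  have hm0 : (m : ℝ) ≠ 0 := Nat.cast_ne_zero.2 hm.ne'
  have hl0 : l ≠ 0 := hl.ne'
  set c : ℝ := l * m with hc
  have hc0 : c ≠ 0 := mul_ne_zero hl0 hm0
  set f : ℕ → ℝ := fun k => x ^ k / (k.factorial * (m : ℝ) ^ k * l ^ k) * (l * m * k + 1) ^ n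
    with hf
  set g : ℕ → ℕ → ℝ := fun j k =>
    W n j * x ^ j * (if j ≤ k then (x / c) ^ (k - j) / (k - j).factorial else 0) with hg
  -- key pointwise identity
  have key : ∀ k : ℕ, f k = ∑ j ∈ range (n + 1), g j k := by
    intro k
    have h1 : (l * m * k + 1 : ℝ) = (m : ℝ) * (l * k) + 1 := by ring
    rw [hf]
    simp only [h1, hW n (l * k), Finset.mul_sum]
    refine Finset.sum_congr rfl fun j _ => ?_
    rw [ffact_cast l k j, hg]
    rcases le_or_gt j k with hjk | hjk
    · simp only [if_pos hjk]
      have hfac : ((k.descFactorial j : ℝ)) = (k.factorial : ℝ) / ((k - j).factorial : ℝ) := by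
        rw [eq_div_iff (by positivity)]
        exact_mod_cast (mul_comm _ _).trans (Nat.factorial_mul_descFactorial hjk)
      have hx : x ^ k = x ^ j * x ^ (k - j) := by
        rw [← pow_add, Nat.add_sub_cancel' hjk]
      have hmk : (m : ℝ) ^ k = (m : ℝ) ^ j * (m : ℝ) ^ (k - j) := by
        rw [← pow_add, Nat.add_sub_cancel' hjk]
      have hlk : l ^ k = l ^ j * l ^ (k - j) := by
        rw [← pow_add, Nat.add_sub_cancel' hjk]
      rw [hfac, hx, hmk, hlk, div_pow, hc]
      field_simp
      ring
    · simp only [if_neg (not_le.2 hjk), Nat.descFactorial_eq_zero_iff_lt.2 hjk]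
      push_cast
      ring
  -- summability of each inner series
  have hsumg : ∀ j : ℕ, Summable (g j) := by
    intro j
    apply Summable.mul_left
    apply (summable_nat_add_iff j).mp
    have : (fun k : ℕ => if j ≤ k + j then (x / c) ^ (k + j - j) / (k + j - j).factorial else 0)
        = fun k : ℕ => (x / c) ^ k / k.factorial := by
      funext k; simp
    simpa [this] using Real.summable_pow_div_factorial (x / c)
  have hsumf : Summable f := by
    have : f = fun k => ∑ j ∈ range (n + 1), g j k := funext key
    rw [this]
    exact summable_sum fun j _ => hsumg j
  have hexp : ∑' k : ℕ, (x / c) ^ k / k.factorial = Real.exp (x / c) := by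
    rw [Real.exp_eq_exp_ℝ, NormedSpace.exp_eq_tsum_div]
  -- tsum of each inner series
  have htsumg : ∀ j : ℕ, ∑' k, g j k = W n j * x ^ j * Real.exp (x / c) := by
    intro j
    rw [hg]
    simp only
    rw [tsum_mul_left]
    congr 1
    rw [← hexp]
    have hinj : Function.Injective (fun k : ℕ => k + j) := add_left_injective j
    have := Function.Injective.tsum_eq (f := fun k : ℕ =>
        if j ≤ k then (x / c) ^ (k - j) / (k - j).factorial else 0) hinj ?_
    · rw [← this]
      apply tsum_congr
      intro k
      simp
    · intro k hk
      simp only [Function.mem_support, ne_eq] at hk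
      by_contra hmem
      simp only [Set.mem_range, not_exists] at hmem
      rcases le_or_gt j k with hjk | hjk
      · exact hmem (k - j) (Nat.sub_add_cancel hjk)
      · exact hk (by simp [Nat.not_le.2 hjk])
  have htsum : ∑' k, f k = Real.exp (x / c) * d n x := by
    have : ∑' k, f k = ∑' k, ∑ j ∈ range (n + 1), g j k := tsum_congr key
    rw [this, Summable.tsum_finsetSum fun j _ => hsumg j, hd]
    simp only [htsumg]
    rw [Finset.mul_sum]
    exact Finset.sum_congr rfl fun j _ => by ring
  refine ⟨summable_abs_iff.2 hsumf, ?_⟩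
  rw [htsum, ← mul_assoc, ← Real.exp_add]
  simp
end

section
/- For nonnegative integers n ≥ k, positive integers m, r, α, we have W^{(r)}_{m,λ}(n,k) / C(k+α, k) = Σ_{l=k}^{n} [C(n,l)/C(l+α,l)] · W_{m,λ}(l+α, k+α) · B^{(α)}_{n-l}((r−1)/(mλ)) · (λm)^{n-l}, where B^{(α)}_j(x) are Bernoulli polynomials of order α. -/
open Finset PowerSeries

noncomputable def Eexp (c : ℝ) : ℝ⟦X⟧ := PowerSeries.mk fun n => c ^ n / n.factorial

lemma Eexp_mul (b c : ℝ) : Eexp b * Eexp c = Eexp (b + c) := by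
  ext n
  rw [Eexp, Eexp, Eexp, coeff_mul, Finset.Nat.sum_antidiagonal_eq_sum_range_succ_mk]
  simp only [coeff_mk]
  rw [add_pow]
  rw [Finset.sum_div]
  refine Finset.sum_congr rfl fun i hi => ?_
  rw [Finset.mem_range, Nat.lt_succ_iff] at hi
  rw [Nat.cast_choose ℝ hi]
  field_simp

lemma Eexp_pow (c : ℝ) (i : ℕ) : (Eexp c) ^ i = Eexp (i * c) := by
  induction i with
  | zero =>
    ext n
    simp [Eexp, coeff_mk, coeff_one]
    rcases Nat.eq_zero_or_pos n with h | h
    · simp [h]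
    · simp [Nat.pos_iff_ne_zero.mp h, zero_pow (Nat.pos_iff_ne_zero.mp h)]
  | succ i ih =>
    rw [pow_succ, ih, Eexp_mul]
    push_cast
    ring_nf

lemma desc_succ_real (i K : ℕ) :
    (i.descFactorial (K + 1) : ℝ) = (i.descFactorial K : ℝ) * ((i : ℝ) - K) := by
  rcases lt_trichotomy K i with h | h | h
  · rw [Nat.descFactorial_succ, Nat.cast_mul, Nat.cast_sub h.le]
    ring
  · subst h
    rw [Nat.descFactorial_eq_zero_iff_lt.mpr (Nat.lt_succ_self K)]
    simp
  · rw [Nat.descFactorial_eq_zero_iff_lt.mpr h,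
      Nat.descFactorial_eq_zero_iff_lt.mpr (h.trans (Nat.lt_succ_self K))]
    simp

lemma ffact_cast_s13 (l : ℝ) (i K : ℕ) : ffact l (i * l) K = (i.descFactorial K : ℝ) * l ^ K := by
  induction K with
  | zero => simp [ffact]
  | succ K ih =>
    rw [ffact, ih, desc_succ_real]
    ring

lemma alt_sum_choose_real (M : ℕ) :
    ∑ j ∈ range (M + 1), (-1 : ℝ) ^ (M - j) * (M.choose j : ℝ) =
      if M = 0 then 1 else 0 := by
  have h2 : ∑ j ∈ range (M + 1), (-1 : ℝ) ^ j * (M.choose j : ℝ)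
      = if M = 0 then 1 else 0 := by
    have h := Int.alternating_sum_range_choose (n := M)
    have h3 := congrArg (fun z : ℤ => (z : ℝ)) h
    simp only [Int.cast_sum, Int.cast_mul, Int.cast_pow, Int.cast_neg, Int.cast_one,
      Int.cast_natCast, apply_ite (fun z : ℤ => (z : ℝ)), Int.cast_zero] at h3
    exact h3
  have key : ∀ j ∈ range (M + 1),
      (-1 : ℝ) ^ (M - j) * (M.choose j : ℝ) = (-1) ^ M * ((-1) ^ j * (M.choose j : ℝ)) := by
    intro j hj
    rw [mem_range, Nat.lt_succ_iff] at hj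
    have hMj : (-1 : ℝ) ^ (M - j) * (-1) ^ j = (-1) ^ M := by
      rw [← pow_add, Nat.sub_add_cancel hj]
    have h4 : ((-1 : ℝ) ^ j) * ((-1 : ℝ) ^ j) = 1 := by
      rw [← pow_add, Even.neg_one_pow ⟨j, by ring⟩]
    rw [← hMj, mul_assoc, ← mul_assoc ((-1 : ℝ) ^ j) ((-1 : ℝ) ^ j), h4, one_mul]
  rw [Finset.sum_congr rfl key, ← Finset.mul_sum, h2]
  split_ifs with h0
  · subst h0; simp
  · simp

lemma alt_sum_desc (K k : ℕ) :
    ∑ i ∈ range (K + 1), (-1 : ℝ) ^ (K - i) * (K.choose i : ℝ) * (i.descFactorial k : ℝ) =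
      if k = K then (K.factorial : ℝ) else 0 := by
  rcases lt_or_ge K k with h | h
  · rw [if_neg (by omega)]
    apply Finset.sum_eq_zero
    intro i hi
    rw [mem_range, Nat.lt_succ_iff] at hi
    rw [Nat.descFactorial_eq_zero_iff_lt.mpr (by omega)]
    simp
  · have hsub : Icc k K ⊆ range (K + 1) := by
      intro i hi; rw [mem_Icc] at hi; rw [mem_range]; omega
    rw [← Finset.sum_subset hsub (by
      intro i hi hni
      rw [mem_range, Nat.lt_succ_iff] at hi
      rw [mem_Icc, not_and_or] at hni
      have : i < k := by omega
      rw [Nat.descFactorial_eq_zero_iff_lt.mpr this]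
      simp)]
    rw [← Finset.Ico_add_one_right_eq_Icc, Finset.sum_Ico_eq_sum_range]
    have hterm : ∀ j ∈ range (K + 1 - k),
        (-1 : ℝ) ^ (K - (k + j)) * (K.choose (k + j) : ℝ) * ((k + j).descFactorial k : ℝ)
        = (k.factorial : ℝ) * (K.choose k : ℝ) *
          ((-1 : ℝ) ^ ((K - k) - j) * ((K - k).choose j : ℝ)) := by
      intro j hj
      rw [mem_range] at hj
      have hkjK : k + j ≤ K := by omega
      have hcm := Nat.choose_mul (n := K) (Nat.le_add_right k j)
      rw [Nat.add_sub_cancel_left] at hcm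
      have hmain : ((K.choose (k + j) : ℝ)) * (((k + j).descFactorial k : ℝ))
          = (k.factorial : ℝ) * (K.choose k : ℝ) * ((K - k).choose j : ℝ) := by
        rw [Nat.descFactorial_eq_factorial_mul_choose]
        rw [show ((K.choose (k + j) : ℝ)) * ((k.factorial * (k + j).choose k : ℕ) : ℝ)
          = ((K.choose (k + j) * (k + j).choose k : ℕ) : ℝ) * (k.factorial : ℝ) by
            push_cast; ring,
          hcm]
        push_cast
        ring
      have hKk : K - (k + j) = (K - k) - j := by omega
      rw [hKk]
      calc (-1 : ℝ) ^ (K - k - j) * (K.choose (k + j) : ℝ) * ((k + j).descFactorial k : ℝ)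
          = (-1 : ℝ) ^ (K - k - j) *
            ((K.choose (k + j) : ℝ) * ((k + j).descFactorial k : ℝ)) := by ring
        _ = _ := by rw [hmain]; ring
    rw [Finset.sum_congr rfl hterm, ← Finset.mul_sum]
    have hKk1 : K + 1 - k = (K - k) + 1 := by omega
    rw [hKk1, alt_sum_choose_real]
    rcases Nat.eq_or_lt_of_le h with rfl | hlt
    · simp [Nat.choose_self, Nat.sub_self]
    · rw [if_neg (by omega), if_neg (by omega)]
      simp

lemma inversion_s13 (n K : ℕ) (g : ℕ → ℝ) (f : ℕ → ℝ)
    (hf : ∀ i : ℕ, f i = ∑ j ∈ range (n + 1), g j * (i.descFactorial j : ℝ)) :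
    ∑ i ∈ range (K + 1), (-1 : ℝ) ^ (K - i) * (K.choose i : ℝ) * f i
      = if K ≤ n then g K * (K.factorial : ℝ) else 0 := by
  have step : ∑ i ∈ range (K + 1), (-1 : ℝ) ^ (K - i) * (K.choose i : ℝ) * f i
      = ∑ j ∈ range (n + 1), g j *
        (∑ i ∈ range (K + 1),
          (-1 : ℝ) ^ (K - i) * (K.choose i : ℝ) * (i.descFactorial j : ℝ)) := by
    simp_rw [hf, Finset.mul_sum]
    rw [Finset.sum_comm]
    exact Finset.sum_congr rfl fun j _ => Finset.sum_congr rfl fun i _ => by ring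
  rw [step]
  simp_rw [alt_sum_desc]
  rw [Finset.sum_congr rfl (fun j _ => by rw [mul_ite, mul_zero])]
  rw [Finset.sum_ite_eq' (range (n + 1)) K (fun j => g j * (K.factorial : ℝ))]
  simp only [mem_range, Nat.lt_succ_iff]

lemma GF (a s : ℝ) (W' : ℕ → ℕ → ℝ)
    (hW' : ∀ (n i : ℕ), (a * i + s) ^ n
      = ∑ j ∈ range (n + 1), W' n j * a ^ j * (i.descFactorial j : ℝ)) (K : ℕ) :
    (PowerSeries.mk fun n => if K ≤ n then W' n K / n.factorial else 0)
        * C (a ^ K * K.factorial)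
      = Eexp s * (Eexp a - 1) ^ K := by
  have expand : Eexp s * (Eexp a - 1) ^ K
      = ∑ i ∈ range (K + 1),
          C ((-1 : ℝ) ^ (K - i) * (K.choose i : ℝ)) * Eexp (s + i * a) := by
    rw [sub_eq_add_neg, add_pow, Finset.mul_sum]
    refine Finset.sum_congr rfl fun i _ => ?_
    rw [Eexp_pow]
    rw [show ((-1 : ℝ⟦X⟧)) ^ (K - i) = C ((-1 : ℝ) ^ (K - i)) by
      rw [map_pow, map_neg, map_one]]
    rw [show ((K.choose i : ℕ) : ℝ⟦X⟧) = C ((K.choose i : ℝ)) by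
      rw [map_natCast]]
    rw [map_mul, ← Eexp_mul]
    ring
  rw [expand]
  ext n
  rw [map_sum]
  have hinv := inversion_s13 n K (fun j => W' n j * a ^ j) (fun i => (a * i + s) ^ n)
    (fun i => by
      show (a * i + s) ^ n = _
      rw [hW' n i])
  simp only [coeff_C_mul, coeff_mk, Eexp, PowerSeries.coeff_mul_C]
  calc (if K ≤ n then W' n K / ↑n.factorial else 0) * (a ^ K * ↑K.factorial)
      = (if K ≤ n then (W' n K * a ^ K) * (K.factorial : ℝ) else 0) / n.factorial := by
        split_ifs with h
        · field_simp
        · simp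
    _ = (∑ i ∈ range (K + 1),
          (-1 : ℝ) ^ (K - i) * (K.choose i : ℝ) * (a * i + s) ^ n) / n.factorial := by
        rw [hinv]
    _ = ∑ i ∈ range (K + 1),
          (-1 : ℝ) ^ (K - i) * (K.choose i : ℝ) * ((s + i * a) ^ n / n.factorial) := by
        rw [Finset.sum_div]
        exact Finset.sum_congr rfl fun i _ => by rw [add_comm (a * i) s, mul_comm (i:ℝ) a]; ring

/-- Theorem 13: identity connecting λ-analogues of Whitney-type r-Stirling numbers of the
second kind, λ-analogues of Whitney-type Stirling numbers of the second kind and values of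
higher-order Bernoulli polynomials, characterized by
`((e^t - 1)/t)^α · ∑_j B^{(α)}_j(x) t^j/j! = e^{xt}`. -/
theorem stmt13 (l : ℝ) (hl : l ≠ 0) (m r α : ℕ) (hm : 0 < m) (hr : 0 < r) (hα : 0 < α)
    (W Wr : ℕ → ℕ → ℝ) (B : ℕ → ℝ → ℝ)
    (hW : ∀ (n : ℕ) (x : ℝ),
      ((m : ℝ) * x + 1) ^ n = ∑ k ∈ range (n + 1), W n k * (m : ℝ) ^ k * ffact l x k)
    (hWr : ∀ (n : ℕ) (x : ℝ),
      ((m : ℝ) * x + r) ^ n = ∑ k ∈ range (n + 1), Wr n k * (m : ℝ) ^ k * ffact l x k)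
    (hB : ∀ x : ℝ,
      (PowerSeries.mk fun j => (1 : ℝ) / (j + 1).factorial) ^ α *
        PowerSeries.mk (fun j => B j x / j.factorial) =
      PowerSeries.mk fun j => x ^ j / j.factorial)
    (n k : ℕ) (hkn : k ≤ n) :
    Wr n k / ((k + α).choose k : ℝ) =
      ∑ j ∈ Icc k n, ((n.choose j : ℝ) / ((j + α).choose j : ℝ)) *
        W (j + α) (k + α) * B (n - j) (((r : ℝ) - 1) / ((m : ℝ) * l)) *
        (l * m) ^ (n - j) := by
  set a : ℝ := (m : ℝ) * l with ha_def
  have ha : a ≠ 0 := mul_ne_zero (Nat.cast_ne_zero.mpr hm.ne') hl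
  set x0 : ℝ := ((r : ℝ) - 1) / a with hx0_def
  -- numeric forms of the defining relations
  have hWnum : ∀ (n' i : ℕ), (a * i + 1) ^ n'
      = ∑ j ∈ range (n' + 1), W n' j * a ^ j * (i.descFactorial j : ℝ) := by
    intro n' i
    rw [show a * (i : ℝ) + 1 = (m : ℝ) * ((i : ℝ) * l) + 1 by rw [ha_def]; ring]
    rw [hW n' ((i : ℝ) * l)]
    refine Finset.sum_congr rfl fun j _ => ?_
    rw [ffact_cast_s13, ha_def, mul_pow]
    ring
  have hWrnum : ∀ (n' i : ℕ), (a * i + (r : ℝ)) ^ n'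
      = ∑ j ∈ range (n' + 1), Wr n' j * a ^ j * (i.descFactorial j : ℝ) := by
    intro n' i
    rw [show a * (i : ℝ) + (r : ℝ) = (m : ℝ) * ((i : ℝ) * l) + (r : ℝ) by rw [ha_def]; ring]
    rw [hWr n' ((i : ℝ) * l)]
    refine Finset.sum_congr rfl fun j _ => ?_
    rw [ffact_cast_s13, ha_def, mul_pow]
    ring
  -- series
  set F : ℝ⟦X⟧ := PowerSeries.mk fun n' => if k ≤ n' then Wr n' k / n'.factorial else 0
    with hF_def
  set Wh : ℝ⟦X⟧ := PowerSeries.mk fun n' =>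
    if k + α ≤ n' then W n' (k + α) / n'.factorial else 0 with hWh_def
  set U : ℝ⟦X⟧ := PowerSeries.mk fun j =>
    if k ≤ j then (α.factorial : ℝ) * W (j + α) (k + α) / ((j + α).factorial : ℝ) else 0
    with hU_def
  set V : ℝ⟦X⟧ := PowerSeries.mk fun i => B i x0 * a ^ i / i.factorial with hV_def
  set G : ℝ⟦X⟧ := Eexp a - 1 with hG_def
  have I1 : F * C (a ^ k * k.factorial) = Eexp (r : ℝ) * G ^ k := GF a r Wr hWrnum k
  have I2 : Wh * C (a ^ (k + α) * (k + α).factorial) = Eexp 1 * G ^ (k + α) :=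
    GF a 1 W hWnum (k + α)
  -- I3 : X^α * U = C α! * Wh
  have I3 : (X : ℝ⟦X⟧) ^ α * U = C (α.factorial : ℝ) * Wh := by
    ext n'
    rw [PowerSeries.coeff_X_pow_mul', coeff_C_mul, hU_def, hWh_def, coeff_mk, coeff_mk]
    split_ifs <;>
      first
        | (exfalso; omega)
        | (rw [Nat.sub_add_cancel ‹α ≤ _›, mul_div_assoc])
        | simp
  -- I5 : C a * X * Da = Eexp a - 1
  set Da : ℝ⟦X⟧ := rescale a (PowerSeries.mk fun j => (1 : ℝ) / (j + 1).factorial)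
    with hDa_def
  have hDa_coeff : ∀ j, coeff j Da = a ^ j / (j + 1).factorial := by
    intro j
    rw [hDa_def, coeff_rescale, coeff_mk]
    ring
  have I5 : C a * X * Da = G := by
    ext n'
    rw [hG_def, map_sub, mul_assoc, coeff_C_mul,
      show (X : ℝ⟦X⟧) = X ^ 1 from (pow_one _).symm, PowerSeries.coeff_X_pow_mul']
    rw [show coeff n' (Eexp a) = a ^ n' / n'.factorial from by rw [Eexp, coeff_mk]]
    rcases Nat.eq_zero_or_pos n' with rfl | hn'
    · simp
    · rw [if_pos (show 1 ≤ n' from hn'), hDa_coeff, PowerSeries.coeff_one, if_neg hn'.ne',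
        sub_zero, show n' - 1 + 1 = n' from by omega, ← mul_div_assoc, ← pow_succ',
        show n' - 1 + 1 = n' from by omega]
  -- I4
  have hresc := congrArg (rescale a) (hB x0)
  rw [map_mul, map_pow] at hresc
  have hV' : rescale a (PowerSeries.mk fun j => B j x0 / j.factorial) = V := by
    ext j
    rw [coeff_rescale, coeff_mk, hV_def, coeff_mk]
    ring
  have hE' : rescale a (PowerSeries.mk fun j => x0 ^ j / j.factorial)
      = Eexp ((r : ℝ) - 1) := by
    ext j
    have hax0 : a * x0 = (r : ℝ) - 1 := by
      rw [hx0_def, mul_comm, div_mul_cancel₀ _ ha]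
    rw [coeff_rescale, coeff_mk, Eexp, coeff_mk, ← mul_div_assoc, ← mul_pow, hax0]
  rw [hV', hE'] at hresc
  have I4 : G ^ α * V = C (a ^ α) * ((X : ℝ⟦X⟧) ^ α * Eexp ((r : ℝ) - 1)) := by
    rw [← I5, mul_pow, mul_pow, mul_assoc, hresc, map_pow]
    ring
  -- scalar identity
  have hcf : (((k + α).choose k : ℕ) : ℝ) * (k.factorial : ℝ) * (α.factorial : ℝ)
      = ((k + α).factorial : ℝ) := by
    have h := Nat.choose_mul_factorial_mul_factorial (Nat.le_add_right k α)
    rw [Nat.add_sub_cancel_left] at h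
    exact_mod_cast congrArg (Nat.cast : ℕ → ℝ) h
  -- key identity
  set N : ℝ⟦X⟧ := C (a ^ (k + α) * (k + α).factorial) * C (a ^ k * k.factorial)
    * ((X : ℝ⟦X⟧) ^ α * G ^ α) with hN_def
  have key : C (((k + α).choose k : ℕ) : ℝ) * (U * V) * N = F * N := by
    have lhs1 : C (((k + α).choose k : ℕ) : ℝ) * (U * V) * N
        = C (((k + α).choose k : ℕ) : ℝ) * C (a ^ k * k.factorial) *
          ((((X : ℝ⟦X⟧) ^ α * U) * C (a ^ (k + α) * (k + α).factorial)) * (G ^ α * V)) := by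
      rw [hN_def]; ring
    rw [lhs1, I3, I4]
    have lhs2 : C (((k + α).choose k : ℕ) : ℝ) * C (a ^ k * k.factorial) *
          (((C (α.factorial : ℝ) * Wh) * C (a ^ (k + α) * (k + α).factorial)) *
            (C (a ^ α) * ((X : ℝ⟦X⟧) ^ α * Eexp ((r : ℝ) - 1))))
        = C (((k + α).choose k : ℕ) : ℝ) * C (a ^ k * k.factorial) *
            C (α.factorial : ℝ) * C (a ^ α) *
            ((Wh * C (a ^ (k + α) * (k + α).factorial)) *
              ((X : ℝ⟦X⟧) ^ α * Eexp ((r : ℝ) - 1))) := by ring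
    rw [lhs2, I2]
    have hscal : C (((k + α).choose k : ℕ) : ℝ) * C (a ^ k * k.factorial) *
          C (α.factorial : ℝ) * C (a ^ α)
        = C (a ^ (k + α) * ((k + α).factorial : ℝ)) := by
      rw [← map_mul, ← map_mul, ← map_mul]
      congr 1
      rw [← hcf, pow_add]
      ring
    rw [hscal]
    have rhs1 : F * N = (F * C (a ^ k * k.factorial)) *
        (C (a ^ (k + α) * (k + α).factorial) * ((X : ℝ⟦X⟧) ^ α * G ^ α)) := by
      rw [hN_def]; ring
    rw [rhs1, I1]
    have hE1 : Eexp 1 * Eexp ((r : ℝ) - 1) = Eexp (r : ℝ) := by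
      rw [Eexp_mul, show (1 : ℝ) + ((r : ℝ) - 1) = (r : ℝ) by ring]
    calc C (a ^ (k + α) * ((k + α).factorial : ℝ)) *
          ((Eexp 1 * G ^ (k + α)) * ((X : ℝ⟦X⟧) ^ α * Eexp ((r : ℝ) - 1)))
        = C (a ^ (k + α) * ((k + α).factorial : ℝ)) *
          (G ^ (k + α) * ((X : ℝ⟦X⟧) ^ α * (Eexp 1 * Eexp ((r : ℝ) - 1)))) := by ring
      _ = Eexp (r : ℝ) * G ^ k *
          (C (a ^ (k + α) * ((k + α).factorial : ℝ)) * ((X : ℝ⟦X⟧) ^ α * G ^ α)) := by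
          rw [hE1]; ring
  -- cancel N
  have hCne : ∀ c : ℝ, c ≠ 0 → (C c : ℝ⟦X⟧) ≠ 0 := by
    intro c hc h0
    exact hc (by simpa using congrArg (constantCoeff) h0)
  have hGne : G ≠ 0 := by
    intro h0
    have : coeff 1 G = a := by
      rw [hG_def, map_sub, Eexp, coeff_mk, PowerSeries.coeff_one, if_neg one_ne_zero]
      simp
    rw [h0, map_zero] at this
    exact ha this.symm
  have hfacne : ∀ j : ℕ, ((j.factorial : ℕ) : ℝ) ≠ 0 :=
    fun j => Nat.cast_ne_zero.mpr (Nat.factorial_ne_zero j)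
  have hNne : N ≠ 0 := by
    rw [hN_def]
    exact mul_ne_zero (mul_ne_zero
      (hCne _ (mul_ne_zero (pow_ne_zero _ ha) (hfacne _)))
      (hCne _ (mul_ne_zero (pow_ne_zero _ ha) (hfacne _))))
      (mul_ne_zero (pow_ne_zero _ PowerSeries.X_ne_zero) (pow_ne_zero _ hGne))
  have main : C (((k + α).choose k : ℕ) : ℝ) * (U * V) = F :=
    mul_right_cancel₀ hNne key
  -- extract coefficient n
  have hco := congrArg (coeff n) main
  rw [coeff_C_mul, coeff_mul, Finset.Nat.sum_antidiagonal_eq_sum_range_succ_mk,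
    hF_def, coeff_mk, if_pos hkn] at hco
  simp only [hU_def, hV_def, coeff_mk] at hco
  -- hco : Ckα * Σ_{i∈range(n+1)} (ite ...) * (B (n-i) x0 * a^(n-i)/(n-i)!) = Wr n k / n!
  have hCk : (((k + α).choose k : ℕ) : ℝ) ≠ 0 :=
    Nat.cast_ne_zero.mpr (Nat.choose_pos (Nat.le_add_right k α)).ne'
  have hsum : ∑ i ∈ range (n + 1),
        (if k ≤ i then (α.factorial : ℝ) * W (i + α) (k + α) / ((i + α).factorial : ℝ) else 0)
          * (B (n - i) x0 * a ^ (n - i) / ((n - i).factorial : ℝ))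
      = ∑ i ∈ Icc k n,
        ((α.factorial : ℝ) * W (i + α) (k + α) / ((i + α).factorial : ℝ))
          * (B (n - i) x0 * a ^ (n - i) / ((n - i).factorial : ℝ)) := by
    have hsub2 : Icc k n ⊆ range (n + 1) := fun i hi => by
      rw [mem_Icc] at hi; rw [mem_range]; omega
    have hzero : ∀ i ∈ range (n + 1), i ∉ Icc k n →
        (if k ≤ i then (α.factorial : ℝ) * W (i + α) (k + α) / ((i + α).factorial : ℝ) else 0)
          * (B (n - i) x0 * a ^ (n - i) / ((n - i).factorial : ℝ)) = 0 := by
      intro i hi hni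
      rw [mem_range] at hi
      rw [mem_Icc, not_and_or] at hni
      rw [if_neg (show ¬ k ≤ i by omega), zero_mul]
    rw [← Finset.sum_subset hsub2 hzero]
    refine Finset.sum_congr rfl fun i hi => ?_
    rw [mem_Icc] at hi
    rw [if_pos hi.1]
  rw [hsum] at hco
  have hWr_eq : Wr n k = (((k + α).choose k : ℕ) : ℝ) *
      (∑ i ∈ Icc k n,
        ((α.factorial : ℝ) * W (i + α) (k + α) / ((i + α).factorial : ℝ))
          * (B (n - i) x0 * a ^ (n - i) / ((n - i).factorial : ℝ))) * (n.factorial : ℝ) := by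
    rw [hco]
    field_simp
  rw [div_eq_iff hCk, hWr_eq]
  rw [Finset.mul_sum, Finset.sum_mul, Finset.sum_mul]
  refine Finset.sum_congr rfl fun i hi => ?_
  rw [mem_Icc] at hi
  have hiαn : i ≤ i + α := Nat.le_add_right i α
  rw [Nat.cast_choose ℝ hi.2, Nat.cast_choose ℝ hiαn, Nat.add_sub_cancel_left]
  rw [show (l * (m : ℝ)) = a by rw [ha_def]; ring]
  have h1 := hfacne n
  have h2 := hfacne i
  have h3 := hfacne (n - i)
  have h4 := hfacne (i + α)
  have h5 := hfacne α
  field_simp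
end
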